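/- arXiv:1512.01229 — 6 statements merged into one kernel-verified Lean document; each statement's English description precedes it below -/
import Mathlib

section
/- Let X be an exchangeable sequence of {0,1}-valued random variables and define the generating polynomials Ω_n(z) := Σ_{h=0}^{n} ω_h^(n) z^h over ℂ. Then for every n ≥ 1 and every z ∈ ℂ, n·Ω_{n−1}(z) = n·Ω_n(z) + (1−z)·Ω_n′(z), where Ω_n′ is the derivative of Ω_n. -/
open MeasureTheory ProbabilityTheory Filter

def Exchangeable {Ω : Type*} [MeasurableSpace Ω] (P : Measure Ω) (X : ℕ → Ω → ℕ) : Prop :=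
  ∀ (n : ℕ) (σ : Equiv.Perm (Fin n)),
    P.map (fun ω => fun i : Fin n => X (σ i) ω) =
      P.map (fun ω => fun i : Fin n => X i ω)

/-- `succProb P X n h = ω_h^(n)`, the probability of exactly `h` successes in the
first `n` trials. -/
noncomputable def succProb {Ω : Type*} [MeasurableSpace Ω] (P : Measure Ω)
    (X : ℕ → Ω → ℕ) (n h : ℕ) : ℝ :=
  (P {ω | ∑ i ∈ Finset.range n, X i ω = h}).toReal

/-- The generating polynomial `Ω_n(z) = ∑_{h=0}^n ω_h^(n) z^h`, as a function on `ℂ`. -/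
noncomputable def genPoly {Ω : Type*} [MeasurableSpace Ω] (P : Measure Ω)
    (X : ℕ → Ω → ℕ) (n : ℕ) : ℂ → ℂ :=
  fun z => ∑ h ∈ Finset.range (n + 1), (succProb P X n h : ℂ) * z ^ h


section aux
variable {Ω : Type*} [MeasurableSpace Ω] (P : Measure Ω) (X : ℕ → Ω → ℕ)

lemma measA (hXmeas : ∀ k, Measurable (X k)) (n h : ℕ) :
    MeasurableSet {ω | ∑ i ∈ Finset.range n, X i ω = h} :=
  (Finset.measurable_sum _ fun i _ => hXmeas i) (measurableSet_singleton h)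

lemma measB (hXmeas : ∀ k, Measurable (X k)) (i v : ℕ) :
    MeasurableSet {ω | X i ω = v} := hXmeas i (measurableSet_singleton v)

lemma exch_event (hXmeas : ∀ k, Measurable (X k))
    (hexch : ∀ (n : ℕ) (σ : Equiv.Perm (Fin n)),
      P.map (fun ω => fun i : Fin n => X (σ i) ω) =
        P.map (fun ω => fun i : Fin n => X i ω))
    (n h v : ℕ) {i j : ℕ} (hi : i < n) (hj : j < n) :
    P ({ω | ∑ k ∈ Finset.range n, X k ω = h} ∩ {ω | X i ω = v}) =
    P ({ω | ∑ k ∈ Finset.range n, X k ω = h} ∩ {ω | X j ω = v}) := by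
  classical
  set σ : Equiv.Perm (Fin n) := Equiv.swap ⟨i, hi⟩ ⟨j, hj⟩ with hσ
  have hmap := hexch n σ
  have hF : Measurable fun ω => fun k : Fin n => X k ω :=
    measurable_pi_lambda _ fun k => hXmeas k
  have hG : Measurable fun ω => fun k : Fin n => X (σ k) ω :=
    measurable_pi_lambda _ fun k => hXmeas _
  set S : Set (Fin n → ℕ) := {w | (∑ k, w k = h) ∧ w ⟨j, hj⟩ = v} with hS
  have hSmeas : MeasurableSet S := by
    have h1 : Measurable fun w : Fin n → ℕ => ∑ k, w k :=
      Finset.measurable_sum _ fun k _ => measurable_pi_apply k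
    have h2 : Measurable fun w : Fin n → ℕ => w ⟨j, hj⟩ := measurable_pi_apply _
    have hSe : S = (fun w : Fin n → ℕ => ∑ k, w k) ⁻¹' {h} ∩
        (fun w : Fin n → ℕ => w ⟨j, hj⟩) ⁻¹' {v} := by
      ext w; simp [hS, Set.mem_setOf_eq]
    rw [hSe]
    exact (h1 (measurableSet_singleton h)).inter (h2 (measurableSet_singleton v))
  have h1 : P ((fun ω => fun k : Fin n => X (σ k) ω) ⁻¹' S) =
      P ((fun ω => fun k : Fin n => X k ω) ⁻¹' S) := by
    rw [← Measure.map_apply hG hSmeas, ← Measure.map_apply hF hSmeas, hmap]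
  have e1 : ((fun ω => fun k : Fin n => X (σ k) ω) ⁻¹' S) =
      {ω | ∑ k ∈ Finset.range n, X k ω = h} ∩ {ω | X i ω = v} := by
    ext ω
    have hsum : ∑ k : Fin n, X (σ k) ω = ∑ k ∈ Finset.range n, X k ω := by
      rw [Equiv.sum_comp σ (fun k : Fin n => X k ω)]
      exact Fin.sum_univ_eq_sum_range (fun k => X k ω) n
    have hswap : σ ⟨j, hj⟩ = ⟨i, hi⟩ := Equiv.swap_apply_right _ _
    simp only [hS, Set.mem_preimage, Set.mem_setOf_eq, Set.mem_inter_iff, hsum, hswap]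
  have e2 : ((fun ω => fun k : Fin n => X k ω) ⁻¹' S) =
      {ω | ∑ k ∈ Finset.range n, X k ω = h} ∩ {ω | X j ω = v} := by
    ext ω
    have hsum : ∑ k : Fin n, X k ω = ∑ k ∈ Finset.range n, X k ω :=
      Fin.sum_univ_eq_sum_range (fun k => X k ω) n
    simp only [hS, Set.mem_preimage, Set.mem_setOf_eq, Set.mem_inter_iff, hsum]
  rw [← e1, ← e2, h1]


variable {Ω : Type*} [MeasurableSpace Ω] (P : Measure Ω) (X : ℕ → Ω → ℕ)

lemma measA' (hXmeas : ∀ k, Measurable (X k)) (n h : ℕ) :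
    MeasurableSet {ω | ∑ i ∈ Finset.range n, X i ω = h} :=
  (Finset.measurable_sum _ fun i _ => hXmeas i) (measurableSet_singleton h)

lemma count_event (hX01 : ∀ k ω, X k ω ≤ 1) (hXmeas : ∀ k, Measurable (X k))
    (n h : ℕ) (v : ℕ) (c : ℕ)
    (hc : ∀ ω, ∑ i ∈ Finset.range n, X i ω = h →
      ∑ i ∈ Finset.range n, (if X i ω = v then (1:ℕ) else 0) = c) :
    ∑ i ∈ Finset.range n,
      P ({ω | ∑ k ∈ Finset.range n, X k ω = h} ∩ {ω | X i ω = v}) =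
    (c : ENNReal) * P {ω | ∑ k ∈ Finset.range n, X k ω = h} := by
  classical
  set A := {ω | ∑ k ∈ Finset.range n, X k ω = h} with hAdef
  have hA : MeasurableSet A := measA' X hXmeas n h
  have hBi : ∀ i : ℕ, MeasurableSet {ω | X i ω = v} :=
    fun i => hXmeas i (measurableSet_singleton v)
  have hpt : ∀ ω, ∑ i ∈ Finset.range n,
      (A ∩ {ω' | X i ω' = v}).indicator (1 : Ω → ENNReal) ω =
      (c : ENNReal) * A.indicator 1 ω := by
    intro ω
    by_cases hωA : ω ∈ A
    · have hsum := hc ω hωA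
      simp only [Set.indicator_apply, Set.mem_inter_iff, Set.mem_setOf_eq, hωA,
        true_and, Set.indicator_of_mem hωA, Pi.one_apply, mul_one]
      have : ∀ i, (if X i ω = v then (1:ENNReal) else 0) =
          ((if X i ω = v then (1:ℕ) else 0 : ℕ) : ENNReal) := by
        intro i; by_cases hx : X i ω = v <;> simp [hx]
      rw [Finset.sum_congr rfl fun i _ => this i, ← Nat.cast_sum, hsum]; simp
    · simp [Set.indicator_of_notMem, hωA, Set.mem_inter_iff]
  calc ∑ i ∈ Finset.range n, P (A ∩ {ω | X i ω = v})
      = ∑ i ∈ Finset.range n, ∫⁻ ω, (A ∩ {ω' | X i ω' = v}).indicator 1 ω ∂P := by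
        refine Finset.sum_congr rfl fun i _ => ?_
        rw [lintegral_indicator_one (hA.inter (hBi i))]
    _ = ∫⁻ ω, ∑ i ∈ Finset.range n, (A ∩ {ω' | X i ω' = v}).indicator 1 ω ∂P := by
        rw [lintegral_finset_sum]
        intro i _
        exact (measurable_one.indicator (hA.inter (hBi i)))
    _ = ∫⁻ ω, (c : ENNReal) * A.indicator 1 ω ∂P := by
        exact lintegral_congr hpt
    _ = (c : ENNReal) * P A := by
        rw [lintegral_const_mul _ (measurable_one.indicator hA), lintegral_indicator_one hA]


end aux

section key
variable {Ω : Type*} [MeasurableSpace Ω] (P : Measure Ω) [IsProbabilityMeasure P] (X : ℕ → Ω → ℕ)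

lemma keyReal (hX01 : ∀ k ω, X k ω ≤ 1) (hXmeas : ∀ k, Measurable (X k))
    (hexch : ∀ (n : ℕ) (σ : Equiv.Perm (Fin n)),
      P.map (fun ω => fun i : Fin n => X (σ i) ω) =
        P.map (fun ω => fun i : Fin n => X i ω))
    (m h : ℕ) :
    ((m + 1 : ℕ) : ℝ) * (P {ω | ∑ i ∈ Finset.range m, X i ω = h}).toReal =
      ((m + 1 - h : ℕ) : ℝ) * (P {ω | ∑ i ∈ Finset.range (m+1), X i ω = h}).toReal +
      ((h + 1 : ℕ) : ℝ) * (P {ω | ∑ i ∈ Finset.range (m+1), X i ω = h + 1}).toReal := by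
  classical
  set A := {ω | ∑ i ∈ Finset.range (m+1), X i ω = h} with hAdef
  set A' := {ω | ∑ i ∈ Finset.range (m+1), X i ω = h + 1} with hA'def
  set A0 := {ω | ∑ i ∈ Finset.range m, X i ω = h} with hA0def
  -- step 1: sums of intersection probabilities
  have hxval : ∀ (i : ℕ) (ω : Ω), (if X i ω = 1 then (1:ℕ) else 0) = X i ω := by
    intro i ω; have := hX01 i ω; interval_cases (X i ω) <;> simp
  have hc1 : ∀ ω, ∑ i ∈ Finset.range (m+1), X i ω = h + 1 →
      ∑ i ∈ Finset.range (m+1), (if X i ω = 1 then (1:ℕ) else 0) = h + 1 := by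
    intro ω hω
    rw [Finset.sum_congr rfl fun i _ => hxval i ω, hω]
  have hc0 : ∀ ω, ∑ i ∈ Finset.range (m+1), X i ω = h →
      ∑ i ∈ Finset.range (m+1), (if X i ω = 0 then (1:ℕ) else 0) = m + 1 - h := by
    intro ω hω
    have h1 : ∀ i, (if X i ω = 0 then (1:ℕ) else 0) = 1 - X i ω := by
      intro i; have := hX01 i ω; interval_cases (X i ω) <;> simp
    rw [Finset.sum_congr rfl fun i _ => h1 i]
    have h2 : ∑ i ∈ Finset.range (m+1), (1 - X i ω) + ∑ i ∈ Finset.range (m+1), X i ω =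
        m + 1 := by
      rw [← Finset.sum_add_distrib]
      rw [Finset.sum_congr rfl (fun i _ => Nat.sub_add_cancel (hX01 i ω))]
      simp
    omega
  -- equality of intersection probabilities across indices
  have hsame : ∀ (h' v : ℕ) (i : ℕ), i < m + 1 →
      P ({ω | ∑ k ∈ Finset.range (m+1), X k ω = h'} ∩ {ω | X i ω = v}) =
      P ({ω | ∑ k ∈ Finset.range (m+1), X k ω = h'} ∩ {ω | X m ω = v}) := by
    intro h' v i hi
    exact exch_event P X hXmeas hexch (m+1) h' v hi (Nat.lt_succ_self m)
  have hsumconst : ∀ (h' v : ℕ),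
      ∑ i ∈ Finset.range (m+1),
        P ({ω | ∑ k ∈ Finset.range (m+1), X k ω = h'} ∩ {ω | X i ω = v}) =
      (m + 1 : ℕ) * P ({ω | ∑ k ∈ Finset.range (m+1), X k ω = h'} ∩ {ω | X m ω = v}) := by
    intro h' v
    rw [Finset.sum_congr rfl fun i hi => hsame h' v i (Finset.mem_range.mp hi)]
    rw [Finset.sum_const, Finset.card_range, nsmul_eq_mul]
  have key1 : ((m+1 : ℕ) : ENNReal) * P (A' ∩ {ω | X m ω = 1}) = ((h+1 : ℕ) : ENNReal) * P A' := by
    rw [← hsumconst (h+1) 1]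
    exact count_event P X hX01 hXmeas (m+1) (h+1) 1 (h+1) hc1
  have key0 : ((m+1 : ℕ) : ENNReal) * P (A ∩ {ω | X m ω = 0}) =
      ((m+1-h : ℕ) : ENNReal) * P A := by
    rw [← hsumconst h 0]
    exact count_event P X hX01 hXmeas (m+1) h 0 (m+1-h) hc0
  -- decomposition
  have hdecomp : A0 = (A ∩ {ω | X m ω = 0}) ∪ (A' ∩ {ω | X m ω = 1}) := by
    ext ω
    have hx := hX01 m ω
    simp only [hA0def, hAdef, hA'def, Set.mem_setOf_eq, Set.mem_union, Set.mem_inter_iff,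
      Finset.sum_range_succ]
    omega
  have hdisj : Disjoint (A ∩ {ω | X m ω = 0}) (A' ∩ {ω | X m ω = 1}) := by
    rw [Set.disjoint_left]
    rintro ω ⟨-, h0⟩ ⟨-, h1⟩
    simp only [Set.mem_setOf_eq] at h0 h1
    omega
  have hmeas1 : MeasurableSet (A' ∩ {ω | X m ω = 1}) :=
    (measA' X hXmeas (m+1) (h+1)).inter (hXmeas m (measurableSet_singleton 1))
  have hPA0 : P A0 = P (A ∩ {ω | X m ω = 0}) + P (A' ∩ {ω | X m ω = 1}) := by
    rw [hdecomp, measure_union hdisj hmeas1]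
  have keyENN : ((m+1 : ℕ) : ENNReal) * P A0 =
      ((m+1-h : ℕ) : ENNReal) * P A + ((h+1 : ℕ) : ENNReal) * P A' := by
    rw [hPA0, mul_add, key0, key1]
  -- pass to real numbers
  have hfin : ∀ s : Set Ω, P s ≠ ⊤ := fun s => measure_ne_top P s
  calc ((m+1:ℕ):ℝ) * (P A0).toReal
      = (((m+1:ℕ):ENNReal) * P A0).toReal := by
        rw [ENNReal.toReal_mul, ENNReal.toReal_natCast]
    _ = (((m+1-h:ℕ):ENNReal) * P A + ((h+1:ℕ):ENNReal) * P A').toReal := by rw [keyENN]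
    _ = ((m+1-h:ℕ):ℝ) * (P A).toReal + ((h+1:ℕ):ℝ) * (P A').toReal := by
        rw [ENNReal.toReal_add (ENNReal.mul_ne_top (by simp) (hfin A))
          (ENNReal.mul_ne_top (by simp) (hfin A')), ENNReal.toReal_mul, ENNReal.toReal_mul,
          ENNReal.toReal_natCast, ENNReal.toReal_natCast]

end key

/-- for an exchangeable sequence of `{0,1}`-valued random variables, for every
`n ≥ 1` and `z ∈ ℂ`, `n Ω_{n-1}(z) = n Ω_n(z) + (1 - z) Ω_n'(z)`. -/
theorem deFinetti_stmt2 {Ω : Type*} [MeasurableSpace Ω] (P : Measure Ω)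
    [IsProbabilityMeasure P] (X : ℕ → Ω → ℕ)
    (hX01 : ∀ k ω, X k ω ≤ 1) (hXmeas : ∀ k, Measurable (X k))
    (hexch : Exchangeable P X) (n : ℕ) (hn : 1 ≤ n) (z : ℂ) :
    (n : ℂ) * genPoly P X (n - 1) z =
      (n : ℂ) * genPoly P X n z + (1 - z) * deriv (genPoly P X n) z := by
  classical
  obtain ⟨m, rfl⟩ : ∃ m, n = m + 1 := ⟨n - 1, (Nat.succ_pred_eq_of_pos hn).symm⟩
  set c : ℕ → ℂ := fun h => ((succProb P X (m+1) h : ℝ) : ℂ) with hc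
  -- complex version of the key combinatorial identity
  have keyC : ∀ h : ℕ, h ≤ m → ((m:ℂ)+1) * ((succProb P X m h : ℝ) : ℂ) =
      (((m:ℂ)+1) - (h:ℂ)) * c h + ((h:ℂ)+1) * c (h+1) := by
    intro h hh
    have hk := keyReal P X hX01 hXmeas hexch m h
    have hk' := congrArg (fun r : ℝ => (r : ℂ)) hk
    push_cast [Nat.cast_sub (show h ≤ m+1 by omega)] at hk'
    simp only [hc, succProb]
    push_cast
    linear_combination hk'
  -- compute the derivative
  have hderiv : deriv (genPoly P X (m+1)) z
      = ∑ h ∈ Finset.range (m+2), c h * ((h:ℂ) * z ^ (h-1)) := by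
    have hdiff : ∀ h ∈ Finset.range (m+2),
        DifferentiableAt ℂ (fun w : ℂ => c h * w ^ h) z :=
      fun h _ => (differentiableAt_pow h).const_mul _
    have : genPoly P X (m+1) = fun w => ∑ h ∈ Finset.range (m+2), c h * w ^ h := rfl
    rw [this, deriv_fun_sum hdiff]
    refine Finset.sum_congr rfl fun h _ => ?_
    rw [deriv_const_mul _ (differentiableAt_pow h), deriv_pow_field]
  have hm1 : (m + 1 : ℕ) - 1 = m := rfl
  rw [hm1, hderiv]
  have hgen : genPoly P X (m+1) z = ∑ h ∈ Finset.range (m+2), c h * z ^ h := rfl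
  have hgen0 : genPoly P X m z
      = ∑ h ∈ Finset.range (m+1), ((succProb P X m h : ℝ) : ℂ) * z ^ h := rfl
  rw [hgen, hgen0]
  -- rewrite the right-hand side
  have hz : ∀ h : ℕ, z * (c h * ((h:ℂ) * z ^ (h-1))) = c h * ((h:ℂ) * z ^ h) := by
    intro h
    cases h with
    | zero => simp
    | succ k => rw [Nat.add_sub_cancel, pow_succ]; ring
  have hRHS : ((m:ℕ)+1 : ℂ) * ∑ h ∈ Finset.range (m+2), c h * z ^ h
      + (1 - z) * ∑ h ∈ Finset.range (m+2), c h * ((h:ℂ) * z ^ (h-1))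
      = ∑ h ∈ Finset.range (m+1),
          ((((m:ℂ)+1) - (h:ℂ)) * c h + ((h:ℂ)+1) * c (h+1)) * z ^ h := by
    rw [sub_mul, one_mul, Finset.mul_sum, Finset.mul_sum]
    rw [Finset.sum_congr rfl fun h _ => hz h]
    have e1 : ∑ h ∈ Finset.range (m+2), ((m:ℂ)+1) * (c h * z ^ h)
        - ∑ h ∈ Finset.range (m+2), c h * ((h:ℂ) * z ^ h)
        = ∑ h ∈ Finset.range (m+2), (((m:ℂ)+1) - (h:ℂ)) * c h * z ^ h := by
      rw [← Finset.sum_sub_distrib]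
      exact Finset.sum_congr rfl fun h _ => by ring
    have e2 : ∑ h ∈ Finset.range (m+2), (((m:ℂ)+1) - (h:ℂ)) * c h * z ^ h
        = ∑ h ∈ Finset.range (m+1), (((m:ℂ)+1) - (h:ℂ)) * c h * z ^ h := by
      rw [Finset.sum_range_succ]
      have h0 : ((m:ℂ)+1) - (((m+1 : ℕ)) : ℂ) = 0 := by push_cast; ring
      rw [h0, zero_mul, zero_mul, add_zero]
    have e3 : ∑ h ∈ Finset.range (m+2), c h * ((h:ℂ) * z ^ (h-1))
        = ∑ h ∈ Finset.range (m+1), ((h:ℂ)+1) * c (h+1) * z ^ h := by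
      rw [Finset.sum_range_succ']
      simp only [Nat.cast_zero, zero_mul, mul_zero, add_zero, Nat.add_sub_cancel]
      refine Finset.sum_congr rfl fun h _ => ?_
      push_cast
      ring
    calc ∑ h ∈ Finset.range (m+2), ((m:ℂ)+1) * (c h * z ^ h)
          + (∑ h ∈ Finset.range (m+2), c h * ((h:ℂ) * z ^ (h-1))
            - ∑ h ∈ Finset.range (m+2), c h * ((h:ℂ) * z ^ h))
        = (∑ h ∈ Finset.range (m+2), ((m:ℂ)+1) * (c h * z ^ h)
            - ∑ h ∈ Finset.range (m+2), c h * ((h:ℂ) * z ^ h))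
          + ∑ h ∈ Finset.range (m+2), c h * ((h:ℂ) * z ^ (h-1)) := by ring
      _ = ∑ h ∈ Finset.range (m+1), (((m:ℂ)+1) - (h:ℂ)) * c h * z ^ h
          + ∑ h ∈ Finset.range (m+1), ((h:ℂ)+1) * c (h+1) * z ^ h := by rw [e1, e2, e3]
      _ = ∑ h ∈ Finset.range (m+1),
            ((((m:ℂ)+1) - (h:ℂ)) * c h + ((h:ℂ)+1) * c (h+1)) * z ^ h := by
          rw [← Finset.sum_add_distrib]
          exact Finset.sum_congr rfl fun h _ => by ring
  push_cast at hRHS ⊢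
  rw [hRHS, Finset.mul_sum]
  refine Finset.sum_congr rfl fun h hh => ?_
  have hhm : h ≤ m := Nat.lt_succ_iff.mp (Finset.mem_range.mp hh)
  rw [← mul_assoc, keyC h hhm]
end

section
/- Let X be an exchangeable sequence of {0,1}-valued random variables and define Ω_n(z) := Σ_{h=0}^{n} ω_h^(n) z^h over ℂ. Then for every n ≥ 1 and every z ∈ ℂ, Ω_n(1+z) = Σ_{h=0}^{n} C(n,h) · ω_h^(h) · z^h, where ω_h^(h) = P(X_0 = X_1 = ⋯ = X_{h−1} = 1) is the probability that the first h trials are all successes (and ω_0^(0) := 1). -/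
open MeasureTheory ProbabilityTheory Filter

/-- `allOnes P X h = ω_h^(h) = P(X_0 = ⋯ = X_{h-1} = 1)`, the probability that the first `h`
trials are all successes (with `allOnes P X 0 = 1` since `P` is a probability measure). -/
noncomputable def allOnes {Ω : Type*} [MeasurableSpace Ω] (P : Measure Ω)
    (X : ℕ → Ω → ℕ) (h : ℕ) : ℝ :=
  (P {ω | ∀ i < h, X i ω = 1}).toReal

open scoped ENNReal

lemma count_lemma {Ω : Type*} (X : ℕ → Ω → ℕ) (hX01 : ∀ k ω, X k ω ≤ 1) (n k : ℕ) (ω : Ω) :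
    (((Finset.range n).powersetCard k).filter (fun s => ∀ i ∈ s, X i ω = 1)).card
      = (∑ i ∈ Finset.range n, X i ω).choose k := by
  classical
  set A := (Finset.range n).filter (fun i => X i ω = 1) with hA
  have hsum : ∑ i ∈ Finset.range n, X i ω = A.card := by
    rw [hA, Finset.card_filter]
    refine Finset.sum_congr rfl fun i _ => ?_
    rcases Nat.le_one_iff_eq_zero_or_eq_one.mp (hX01 i ω) with h | h <;> simp [h]
  have hset : ((Finset.range n).powersetCard k).filter (fun s => ∀ i ∈ s, X i ω = 1)
      = A.powersetCard k := by
    ext s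
    simp only [Finset.mem_filter, Finset.mem_powersetCard, hA, Finset.subset_iff,
      Finset.mem_filter]
    constructor
    · rintro ⟨⟨hs, hc⟩, hall⟩
      exact ⟨fun x hx => ⟨hs hx, hall x hx⟩, hc⟩
    · rintro ⟨hs, hc⟩
      exact ⟨⟨fun x hx => (hs hx).1, hc⟩, fun i hi => (hs hi).2⟩
  rw [hset, Finset.card_powersetCard, hsum]

lemma perm_lemma (n k : ℕ) (s : Finset ℕ) (hsn : s ⊆ Finset.range n) (hsc : s.card = k) :
    ∃ σ : Equiv.Perm (Fin n), ∀ i : Fin n, ((σ i : ℕ) ∈ s ↔ (i : ℕ) < k) := by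
  classical
  have hkn : k ≤ n := by
    rw [← hsc, ← Finset.card_range n]; exact Finset.card_le_card hsn
  have hmem : ∀ m ∈ s, m < n := fun m hm => Finset.mem_range.mp (hsn hm)
  have hmem' : ∀ m ∈ Finset.range k, m < n := fun m hm =>
    lt_of_lt_of_le (Finset.mem_range.mp hm) hkn
  set p : Fin n → Prop := fun i => (i : ℕ) < k with hp
  set q : Fin n → Prop := fun i => (i : ℕ) ∈ s with hq
  have hcp : Fintype.card {i : Fin n // p i} = k := by
    rw [Fintype.card_subtype]
    have : Finset.filter p Finset.univ = (Finset.range k).attachFin hmem' := by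
      ext a; simp [Finset.mem_attachFin, hp]
    rw [this, Finset.card_attachFin, Finset.card_range]
  have hcq : Fintype.card {i : Fin n // q i} = k := by
    rw [Fintype.card_subtype]
    have : Finset.filter q Finset.univ = s.attachFin hmem := by
      ext a; simp [Finset.mem_attachFin, hq]
    rw [this, Finset.card_attachFin, hsc]
  have h1 : Fintype.card {i : Fin n // p i} = Fintype.card {i : Fin n // q i} := by
    rw [hcp, hcq]
  have h2 : Fintype.card {i : Fin n // ¬ p i} = Fintype.card {i : Fin n // ¬ q i} := by
    rw [Fintype.card_subtype_compl, Fintype.card_subtype_compl, h1]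
  set e := Fintype.equivOfCardEq h1 with he
  set f := Fintype.equivOfCardEq h2 with hf
  refine ⟨Equiv.subtypeCongr e f, fun i => ?_⟩
  by_cases hi : p i
  · have : Equiv.subtypeCongr e f i = (e ⟨i, hi⟩ : Fin n) := by
      simp [Equiv.subtypeCongr, hi]
    rw [this]
    exact iff_of_true (e ⟨i, hi⟩).2 hi
  · have : Equiv.subtypeCongr e f i = (f ⟨i, hi⟩ : Fin n) := by
      simp [Equiv.subtypeCongr, hi]
    rw [this]
    exact iff_of_false (f ⟨i, hi⟩).2 hi

lemma exchange_lemma{Ω : Type*} [MeasurableSpace Ω] (P : Measure Ω) (X : ℕ → Ω → ℕ)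
    (hXmeas : ∀ k, Measurable (X k)) (hexch : Exchangeable P X)
    (n k : ℕ) (s : Finset ℕ) (hsn : s ⊆ Finset.range n) (hsc : s.card = k) :
    P {ω | ∀ i ∈ s, X i ω = 1} = P {ω | ∀ i < k, X i ω = 1} := by
  classical
  have hkn : k ≤ n := by
    rw [← hsc, ← Finset.card_range n]; exact Finset.card_le_card hsn
  obtain ⟨σ, hσ⟩ := perm_lemma n k s hsn hsc
  set C : Set (Fin n → ℕ) := {f | ∀ i : Fin n, (i : ℕ) < k → f i = 1} with hC
  have hCmeas : MeasurableSet C := by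
    have : C = ⋂ i : Fin n, {f : Fin n → ℕ | (i : ℕ) < k → f i = 1} := by
      ext f; simp [hC]
    rw [this]
    refine MeasurableSet.iInter fun i => ?_
    by_cases hik : (i : ℕ) < k
    · have : {f : Fin n → ℕ | (i : ℕ) < k → f i = 1} = (fun f : Fin n → ℕ => f i) ⁻¹' {1} := by
        ext f; simp [hik]
      rw [this]
      exact measurable_pi_apply i (measurableSet_singleton 1)
    · have : {f : Fin n → ℕ | (i : ℕ) < k → f i = 1} = Set.univ := by
        ext f; simp [hik]
      rw [this]; exact MeasurableSet.univ
  have hG : Measurable (fun ω => fun i : Fin n => X (σ i) ω) :=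
    measurable_pi_lambda _ fun i => hXmeas _
  have hF : Measurable (fun ω => fun i : Fin n => X i ω) :=
    measurable_pi_lambda _ fun i => hXmeas _
  have e1 : (fun ω => fun i : Fin n => X (σ i) ω) ⁻¹' C = {ω | ∀ i ∈ s, X i ω = 1} := by
    ext ω
    simp only [Set.mem_preimage, hC, Set.mem_setOf_eq]
    constructor
    · intro h j hj
      have hjn : j < n := Finset.mem_range.mp (hsn hj)
      set j' : Fin n := ⟨j, hjn⟩ with hj'
      have h1 : ((σ (σ.symm j') : ℕ)) ∈ s := by rw [Equiv.apply_symm_apply]; exact hj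
      have h2 : ((σ.symm j' : Fin n) : ℕ) < k := (hσ _).mp h1
      have := h (σ.symm j') h2
      rwa [Equiv.apply_symm_apply] at this
    · intro h i hik
      exact h _ ((hσ i).mpr hik)
  have e2 : (fun ω => fun i : Fin n => X i ω) ⁻¹' C = {ω | ∀ i < k, X i ω = 1} := by
    ext ω
    simp only [Set.mem_preimage, hC, Set.mem_setOf_eq]
    constructor
    · intro h m hm
      exact h ⟨m, lt_of_lt_of_le hm hkn⟩ hm
    · intro h i hik
      exact h _ hik
  calc P {ω | ∀ i ∈ s, X i ω = 1}
      = P.map (fun ω => fun i : Fin n => X (σ i) ω) C := by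
        rw [Measure.map_apply hG hCmeas, e1]
    _ = P.map (fun ω => fun i : Fin n => X i ω) C := by rw [hexch n σ]
    _ = P {ω | ∀ i < k, X i ω = 1} := by rw [Measure.map_apply hF hCmeas, e2]

lemma key_ennreal{Ω : Type*} [MeasurableSpace Ω] (P : Measure Ω) [IsProbabilityMeasure P]
    (X : ℕ → Ω → ℕ) (hX01 : ∀ k ω, X k ω ≤ 1) (hXmeas : ∀ k, Measurable (X k)) (n k : ℕ) :
    ∑ h ∈ Finset.range (n + 1),
        (h.choose k : ℝ≥0∞) * P {ω | ∑ i ∈ Finset.range n, X i ω = h}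
      = ∑ s ∈ (Finset.range n).powersetCard k, P {ω | ∀ i ∈ s, X i ω = 1} := by
  classical
  set S : Ω → ℕ := fun ω => ∑ i ∈ Finset.range n, X i ω with hS
  have hSmeas : Measurable S := Finset.measurable_sum _ fun i _ => hXmeas i
  set A : ℕ → Set Ω := fun h => {ω | S ω = h} with hA
  have hAmeas : ∀ h, MeasurableSet (A h) := fun h => hSmeas (measurableSet_singleton h)
  set B : Finset ℕ → Set Ω := fun s => {ω | ∀ i ∈ s, X i ω = 1} with hB
  have hBmeas : ∀ s : Finset ℕ, MeasurableSet (B s) := by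
    intro s
    have : B s = ⋂ i ∈ s, (X i) ⁻¹' {1} := by
      ext ω; simp [hB]
    rw [this]
    exact MeasurableSet.biInter s.countable_toSet fun i _ => hXmeas i (measurableSet_singleton 1)
  -- step (i)
  have step1 : ∀ h, ∑ s ∈ (Finset.range n).powersetCard k, P (B s ∩ A h)
      = (h.choose k : ℝ≥0∞) * P (A h) := by
    intro h
    have hrw : ∀ s ∈ (Finset.range n).powersetCard k,
        P (B s ∩ A h) = ∫⁻ ω, (B s ∩ A h).indicator (fun _ => (1:ℝ≥0∞)) ω ∂P := by
      intro s _
      rw [lintegral_indicator_const ((hBmeas s).inter (hAmeas h)), one_mul]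
    rw [Finset.sum_congr rfl hrw,
      ← lintegral_finset_sum _ (fun s _ =>
        (measurable_const.indicator ((hBmeas s).inter (hAmeas h))))]
    have hpoint : ∀ ω, ∑ s ∈ (Finset.range n).powersetCard k,
        (B s ∩ A h).indicator (fun _ => (1:ℝ≥0∞)) ω
        = (A h).indicator (fun _ => (h.choose k : ℝ≥0∞)) ω := by
      intro ω
      by_cases hω : ω ∈ A h
      · simp only [Set.indicator_apply, Set.mem_inter_iff, hω, and_true,
          Set.indicator_of_mem hω]
        rw [Finset.sum_boole]
        have : Finset.filter (fun s => ω ∈ B s) ((Finset.range n).powersetCard k)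
            = Finset.filter (fun s => ∀ i ∈ s, X i ω = 1) ((Finset.range n).powersetCard k) := by
          apply Finset.filter_congr; intro s _; simp [hB]
        rw [this, count_lemma X hX01 n k ω]
        have hSω : (∑ i ∈ Finset.range n, X i ω) = h := hω
        rw [hSω]
        simp
      · simp only [Set.indicator_apply, Set.mem_inter_iff, hω, and_false, if_false,
          Set.indicator_of_notMem hω]
        simp
    rw [lintegral_congr hpoint, lintegral_indicator_const (hAmeas h)]
  -- step (ii)
  have step2 : ∀ s : Finset ℕ, P (B s) = ∑ h ∈ Finset.range (n + 1), P (B s ∩ A h) := by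
    intro s
    have hdisj : (↑(Finset.range (n+1)) : Set ℕ).PairwiseDisjoint (fun h => B s ∩ A h) := by
      intro h1 _ h2 _ hne
      refine Set.disjoint_left.mpr fun ω hω1 hω2 => hne ?_
      have e1 : S ω = h1 := hω1.2
      have e2 : S ω = h2 := hω2.2
      rw [← e1, e2]
    have hcover : (⋃ h ∈ Finset.range (n+1), B s ∩ A h) = B s := by
      ext ω
      simp only [Set.mem_iUnion, Finset.mem_range, Set.mem_inter_iff]
      constructor
      · rintro ⟨h, _, hb, _⟩; exact hb
      · intro hb
        refine ⟨S ω, ?_, hb, rfl⟩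
        have : S ω ≤ n := by
          calc S ω ≤ ∑ i ∈ Finset.range n, 1 := Finset.sum_le_sum fun i _ => hX01 i ω
            _ = n := by simp
        omega
    calc P (B s) = P (⋃ h ∈ Finset.range (n+1), B s ∩ A h) := by rw [hcover]
      _ = ∑ h ∈ Finset.range (n + 1), P (B s ∩ A h) :=
          measure_biUnion_finset hdisj fun h _ => (hBmeas s).inter (hAmeas h)
  calc ∑ h ∈ Finset.range (n + 1), (h.choose k : ℝ≥0∞) * P (A h)
      = ∑ h ∈ Finset.range (n + 1), ∑ s ∈ (Finset.range n).powersetCard k, P (B s ∩ A h) := by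
        refine Finset.sum_congr rfl fun h _ => (step1 h).symm
    _ = ∑ s ∈ (Finset.range n).powersetCard k, ∑ h ∈ Finset.range (n + 1), P (B s ∩ A h) :=
        Finset.sum_comm
    _ = ∑ s ∈ (Finset.range n).powersetCard k, P (B s) := by
        refine Finset.sum_congr rfl fun s _ => (step2 s).symm

/-- for an exchangeable sequence of `{0,1}`-valued random variables, for every
`n ≥ 1` and `z ∈ ℂ`, `Ω_n(1+z) = ∑_{h=0}^n C(n,h) ω_h^(h) z^h`. -/
theorem deFinetti_stmt3 {Ω : Type*} [MeasurableSpace Ω] (P : Measure Ω)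
    [IsProbabilityMeasure P] (X : ℕ → Ω → ℕ)
    (hX01 : ∀ k ω, X k ω ≤ 1) (hXmeas : ∀ k, Measurable (X k))
    (hexch : Exchangeable P X) (n : ℕ) (hn : 1 ≤ n) (z : ℂ) :
    ∑ h ∈ Finset.range (n + 1), (succProb P X n h : ℂ) * (1 + z) ^ h =
      ∑ h ∈ Finset.range (n + 1), (n.choose h : ℂ) * (allOnes P X h : ℂ) * z ^ h := by
  classical
  have key : ∀ k, ∑ h ∈ Finset.range (n + 1), (h.choose k : ℝ) * succProb P X n h
      = (n.choose k : ℝ) * allOnes P X k := by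
    intro k
    have hkey := key_ennreal P X hX01 hXmeas n k
    have hexg : ∀ s ∈ (Finset.range n).powersetCard k,
        P {ω | ∀ i ∈ s, X i ω = 1} = P {ω | ∀ i < k, X i ω = 1} := by
      intro s hs
      rw [Finset.mem_powersetCard] at hs
      exact exchange_lemma P X hXmeas hexch n k s hs.1 hs.2
    have hrhs : ∑ s ∈ (Finset.range n).powersetCard k, P {ω | ∀ i ∈ s, X i ω = 1}
        = (n.choose k : ℝ≥0∞) * P {ω | ∀ i < k, X i ω = 1} := by
      rw [Finset.sum_congr rfl hexg, Finset.sum_const, Finset.card_powersetCard,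
        Finset.card_range, nsmul_eq_mul]
    have hmain := hkey.trans hrhs
    have := congrArg ENNReal.toReal hmain
    rw [ENNReal.toReal_sum (fun h _ => ENNReal.mul_ne_top (ENNReal.natCast_ne_top _)
      (measure_ne_top P _))] at this
    simp only [ENNReal.toReal_mul, ENNReal.toReal_natCast] at this
    exact this
  have expand : ∀ h ∈ Finset.range (n + 1),
      (succProb P X n h : ℂ) * (1 + z) ^ h
        = ∑ k ∈ Finset.range (n + 1), (h.choose k : ℂ) * (succProb P X n h : ℂ) * z ^ k := by
    intro h hh
    rw [add_comm (1:ℂ) z, add_pow]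
    simp only [one_pow, mul_one]
    rw [Finset.mul_sum]
    have hsub : Finset.range (h+1) ⊆ Finset.range (n+1) :=
      Finset.range_subset_range.mpr (by simp only [Finset.mem_range] at hh; omega)
    have hzero : ∀ k ∈ Finset.range (n+1), k ∉ Finset.range (h+1) →
        (succProb P X n h : ℂ) * (z ^ k * (h.choose k : ℂ)) = 0 := by
      intro k _ hk
      simp only [Finset.mem_range, not_lt] at hk
      rw [Nat.choose_eq_zero_of_lt (by omega)]
      simp
    rw [Finset.sum_subset hsub hzero]
    refine Finset.sum_congr rfl fun k _ => ?_; ring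
  rw [Finset.sum_congr rfl expand, Finset.sum_comm]
  refine Finset.sum_congr rfl fun k _ => ?_
  rw [← Finset.sum_mul]
  congr 1
  have hk := key k
  have := congrArg (fun r : ℝ => (r : ℂ)) hk
  push_cast at this ⊢
  rw [← this]
end

section
/- Let X be an exchangeable sequence of {0,1}-valued random variables and define Ω_n(z) := Σ_{h=0}^{n} ω_h^(n) z^h over ℂ. Then the entire function Ω(1+z) := Σ_{h=0}^{∞} ω_h^(h) z^h / h! is well defined (the series converges for all z ∈ ℂ), and the functions z ↦ Ω_n(1 + z/n) converge to z ↦ Ω(1+z) as n → ∞, uniformly on every compact subset of ℂ. -/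
open MeasureTheory ProbabilityTheory Filter
open scoped Topology

section Aux

open Finset Topology
open scoped ENNReal

private lemma dF4_exists_perm {n k : ℕ} (hk : k ≤ n) (A : Finset (Fin n)) (hcard : A.card = k) :
    ∃ σ : Equiv.Perm (Fin n), ∀ i : Fin n, ((i : ℕ) < k ↔ σ i ∈ A) := by
  classical
  have hcardp : Fintype.card {x : Fin n // (x : ℕ) < k} = k := by
    rw [Fintype.card_subtype]
    rw [show Finset.univ.filter (fun x : Fin n => (x:ℕ) < k)
        = (Finset.range k).attachFin (fun m hm => lt_of_lt_of_le (Finset.mem_range.mp hm) hk)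
      from by ext i; simp]
    rw [Finset.card_attachFin, Finset.card_range]
  have hcardq : Fintype.card {x : Fin n // x ∈ A} = k := (Fintype.card_coe A).trans hcard
  have hc1 : Fintype.card {x : Fin n // ¬ (x : ℕ) < k} = Fintype.card {x : Fin n // ¬ x ∈ A} := by
    rw [Fintype.card_subtype_compl, Fintype.card_subtype_compl, hcardp, hcardq]
  let e := Fintype.equivOfCardEq (hcardp.trans hcardq.symm)
  let f := Fintype.equivOfCardEq hc1
  refine ⟨Equiv.subtypeCongr e f, fun i => ?_⟩
  constructor
  · intro h
    have : Equiv.subtypeCongr e f i = (e ⟨i, h⟩ : Fin n) := by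
      simp [Equiv.subtypeCongr, h]
    rw [this]; exact (e ⟨i, h⟩).2
  · intro h
    by_contra hlt
    have : Equiv.subtypeCongr e f i = (f ⟨i, hlt⟩ : Fin n) := by
      simp [Equiv.subtypeCongr, hlt]
    rw [this] at h; exact (f ⟨i, hlt⟩).2 h

private lemma dF4_prob_all_ones {Ω : Type*} [MeasurableSpace Ω] (P : Measure Ω) (X : ℕ → Ω → ℕ)
    (hXmeas : ∀ k, Measurable (X k)) (hexch : Exchangeable P X)
    {n k : ℕ} (hk : k ≤ n) (A : Finset (Fin n)) (hcard : A.card = k) :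
    P {ω | ∀ i ∈ A, X (i:ℕ) ω = 1} = P {ω | ∀ i < k, X i ω = 1} := by
  obtain ⟨σ, hσ⟩ := dF4_exists_perm hk A hcard
  have hmeasmap : Measurable fun ω => fun i : Fin n => X i ω :=
    measurable_pi_lambda _ fun i => hXmeas i
  have hmeasmap2 : Measurable fun ω => fun i : Fin n => X (σ i) ω :=
    measurable_pi_lambda _ fun i => hXmeas _
  have hS : MeasurableSet {f : Fin n → ℕ | ∀ i : Fin n, (i:ℕ) < k → f i = 1} := by
    have : {f : Fin n → ℕ | ∀ i : Fin n, (i:ℕ) < k → f i = 1}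
        = ⋂ (i : Fin n) (_ : (i:ℕ) < k), (fun f : Fin n → ℕ => f i) ⁻¹' {1} := by
      ext f; simp
    rw [this]
    exact MeasurableSet.iInter fun i => MeasurableSet.iInter fun _ =>
      (measurable_pi_apply i) (measurableSet_singleton 1)
  have h1 := congrArg
    (fun μ : Measure (Fin n → ℕ) => μ {f | ∀ i : Fin n, (i:ℕ) < k → f i = 1}) (hexch n σ)
  rw [Measure.map_apply hmeasmap2 hS, Measure.map_apply hmeasmap hS] at h1
  have e1 : (fun ω => fun i : Fin n => X (σ i) ω) ⁻¹' {f | ∀ i : Fin n, (i:ℕ) < k → f i = 1}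
      = {ω | ∀ i ∈ A, X (i:ℕ) ω = 1} := by
    ext ω
    simp only [Set.mem_preimage, Set.mem_setOf_eq]
    constructor
    · intro h j hj
      have h2 : ((σ.symm j : Fin n) : ℕ) < k := (hσ _).mpr (by rw [Equiv.apply_symm_apply]; exact hj)
      have := h (σ.symm j) h2
      rwa [Equiv.apply_symm_apply] at this
    · intro h i hi
      exact h (σ i) ((hσ i).mp hi)
  have e2 : (fun ω => fun i : Fin n => X (i:ℕ) ω) ⁻¹' {f | ∀ i : Fin n, (i:ℕ) < k → f i = 1}
      = {ω | ∀ i < k, X i ω = 1} := by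
    ext ω
    simp only [Set.mem_preimage, Set.mem_setOf_eq]
    exact ⟨fun h i hik => h ⟨i, lt_of_lt_of_le hik hk⟩ hik, fun h i hik => h i hik⟩
  rw [e1, e2] at h1
  exact h1

private lemma dF4_choose_eq_card (n k : ℕ) (g : ℕ → ℕ) (hg : ∀ i, g i ≤ 1) :
    ((∑ i ∈ range n, g i).choose k)
      = ((powersetCard k (range n)).filter (fun A => ∀ i ∈ A, g i = 1)).card := by
  classical
  have hsum : ∑ i ∈ range n, g i = ((range n).filter (fun i => g i = 1)).card := by
    rw [Finset.card_filter]
    apply Finset.sum_congr rfl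
    intro i _
    rcases Nat.le_one_iff_eq_zero_or_eq_one.mp (hg i) with h | h <;> simp [h]
  rw [hsum, ← Finset.card_powersetCard]
  congr 1
  ext A
  simp only [mem_powersetCard, mem_filter, Finset.subset_iff, mem_filter]
  constructor
  · rintro ⟨hsub, hcard⟩
    exact ⟨⟨fun {i} hi => (hsub hi).1, hcard⟩, fun i hi => (hsub hi).2⟩
  · rintro ⟨⟨hsub, hcard⟩, hone⟩
    exact ⟨fun {i} hi => ⟨hsub hi, hone i hi⟩, hcard⟩

private lemma dF4_L1 {Ω : Type*} [MeasurableSpace Ω] (P : Measure Ω) (X : ℕ → Ω → ℕ)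
    (hX01 : ∀ k ω, X k ω ≤ 1) (hXmeas : ∀ k, Measurable (X k))
    (hexch : Exchangeable P X) {n k : ℕ} (hk : k ≤ n) :
    ∑ h ∈ range (n + 1), (h.choose k : ℝ≥0∞) * P {ω | ∑ i ∈ range n, X i ω = h}
      = (n.choose k : ℝ≥0∞) * P {ω | ∀ i < k, X i ω = 1} := by
  classical
  have hSmeas : Measurable fun ω => ∑ i ∈ range n, X i ω :=
    Finset.measurable_sum _ (fun i _ => hXmeas i)
  have hEh : ∀ h : ℕ, MeasurableSet {ω | ∑ i ∈ range n, X i ω = h} := fun h =>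
    hSmeas (measurableSet_singleton h)
  have hEA : ∀ A : Finset ℕ, MeasurableSet {ω | ∀ i ∈ A, X i ω = 1} := by
    intro A
    have : {ω | ∀ i ∈ A, X i ω = 1} = ⋂ i ∈ A, (X i) ⁻¹' {1} := by ext; simp
    rw [this]
    exact MeasurableSet.biInter A.countable_toSet fun i _ => (hXmeas i) (measurableSet_singleton 1)
  have hSle : ∀ ω, ∑ i ∈ range n, X i ω ≤ n := by
    intro ω
    calc ∑ i ∈ range n, X i ω ≤ ∑ _i ∈ range n, 1 := Finset.sum_le_sum fun i _ => hX01 i ω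
    _ = n := by simp
  have key1 : ∀ ω, (((∑ i ∈ range n, X i ω).choose k : ℝ≥0∞))
      = ∑ h ∈ range (n + 1),
          Set.indicator {ω' | ∑ i ∈ range n, X i ω' = h} (fun _ => (h.choose k : ℝ≥0∞)) ω := by
    intro ω
    symm
    rw [Finset.sum_eq_single_of_mem (∑ i ∈ range n, X i ω)
      (Finset.mem_range.mpr (Nat.lt_succ_of_le (hSle ω)))]
    · exact Set.indicator_of_mem (show ω ∈ {ω' | ∑ i ∈ range n, X i ω' = ∑ i ∈ range n, X i ω} from rfl) _
    · intro h _ hne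
      refine Set.indicator_of_notMem ?_ _
      intro hm
      have hm' : ∑ i ∈ range n, X i ω = h := hm
      exact hne hm'.symm
  have key2 : ∀ ω, (((∑ i ∈ range n, X i ω).choose k : ℝ≥0∞))
      = ∑ A ∈ powersetCard k (range n),
          Set.indicator {ω' | ∀ i ∈ A, X i ω' = 1} (fun _ => (1 : ℝ≥0∞)) ω := by
    intro ω
    rw [dF4_choose_eq_card n k (fun i => X i ω) (fun i => hX01 i ω), Finset.card_filter]
    push_cast
    apply Finset.sum_congr rfl
    intro A _
    by_cases h : ∀ i ∈ A, X i ω = 1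
    · rw [if_pos h, Set.indicator_of_mem (show ω ∈ {ω' | ∀ i ∈ A, X i ω' = 1} from h)]
    · rw [if_neg h, Set.indicator_of_notMem (show ω ∉ {ω' | ∀ i ∈ A, X i ω' = 1} from h)]
  have int1 : ∫⁻ ω, (((∑ i ∈ range n, X i ω).choose k : ℝ≥0∞)) ∂P
      = ∑ h ∈ range (n + 1), (h.choose k : ℝ≥0∞) * P {ω | ∑ i ∈ range n, X i ω = h} := by
    rw [lintegral_congr key1, lintegral_finset_sum _
      (fun h _ => measurable_const.indicator (hEh h))]
    exact Finset.sum_congr rfl fun h _ => lintegral_indicator_const (hEh h) _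
  have int2 : ∫⁻ ω, (((∑ i ∈ range n, X i ω).choose k : ℝ≥0∞)) ∂P
      = (n.choose k : ℝ≥0∞) * P {ω | ∀ i < k, X i ω = 1} := by
    rw [lintegral_congr key2, lintegral_finset_sum _
      (fun A _ => measurable_const.indicator (hEA A))]
    have : ∀ A ∈ powersetCard k (range n),
        ∫⁻ ω, Set.indicator {ω' | ∀ i ∈ A, X i ω' = 1} (fun _ => (1 : ℝ≥0∞)) ω ∂P
          = P {ω | ∀ i < k, X i ω = 1} := by
      intro A hA
      rw [lintegral_indicator_const (hEA A), one_mul]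
      obtain ⟨hsub, hcard⟩ := Finset.mem_powersetCard.mp hA
      set B : Finset (Fin n) := A.attachFin (fun m hm => Finset.mem_range.mp (hsub hm)) with hB
      have hBcard : B.card = k := by rw [hB, Finset.card_attachFin, hcard]
      have heq : {ω | ∀ i ∈ A, X i ω = 1} = {ω | ∀ i ∈ B, X (i : ℕ) ω = 1} := by
        ext ω
        simp only [Set.mem_setOf_eq]
        constructor
        · intro h i hi
          exact h _ ((Finset.mem_attachFin _).mp hi)
        · intro h i hi
          exact h ⟨i, Finset.mem_range.mp (hsub hi)⟩ ((Finset.mem_attachFin _).mpr hi)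
      rw [heq]
      exact dF4_prob_all_ones P X hXmeas hexch hk B hBcard
    rw [Finset.sum_congr rfl this, Finset.sum_const, Finset.card_powersetCard,
      Finset.card_range, nsmul_eq_mul]
  rw [← int1, int2]

private lemma dF4_L1_real {Ω : Type*} [MeasurableSpace Ω] (P : Measure Ω)
    [IsProbabilityMeasure P] (X : ℕ → Ω → ℕ)
    (hX01 : ∀ k ω, X k ω ≤ 1) (hXmeas : ∀ k, Measurable (X k))
    (hexch : Exchangeable P X) {n k : ℕ} (hk : k ≤ n) :
    ∑ h ∈ range (n + 1), (h.choose k : ℝ) * succProb P X n h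
      = (n.choose k : ℝ) * allOnes P X k := by
  have h1 := congrArg ENNReal.toReal (dF4_L1 P X hX01 hXmeas hexch hk)
  rw [ENNReal.toReal_sum (fun h _ => by
    exact ENNReal.mul_ne_top (ENNReal.natCast_ne_top _) (measure_ne_top P _))] at h1
  simp only [ENNReal.toReal_mul, ENNReal.toReal_natCast] at h1
  exact h1

private lemma dF4_L2 {Ω : Type*} [MeasurableSpace Ω] (P : Measure Ω)
    [IsProbabilityMeasure P] (X : ℕ → Ω → ℕ)
    (hX01 : ∀ k ω, X k ω ≤ 1) (hXmeas : ∀ k, Measurable (X k))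
    (hexch : Exchangeable P X) {n : ℕ} (hn : 1 ≤ n) (z : ℂ) :
    genPoly P X n (1 + z / n)
      = ∑ k ∈ range (n + 1),
          (allOnes P X k : ℂ) * (((n.choose k : ℝ) / (n : ℝ) ^ k : ℝ) : ℂ) * z ^ k := by
  have hnz : ((n : ℂ)) ≠ 0 := Nat.cast_ne_zero.mpr (by omega)
  unfold genPoly
  have expand : ∀ h ∈ range (n + 1), (succProb P X n h : ℂ) * (1 + z / n) ^ h
      = ∑ k ∈ range (n + 1), (succProb P X n h : ℂ) * ((h.choose k : ℂ) * (z / n) ^ k) := by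
    intro h hh
    have step1 : (succProb P X n h : ℂ) * (1 + z / n) ^ h
        = ∑ k ∈ range (h + 1), (succProb P X n h : ℂ) * ((h.choose k : ℂ) * (z / n) ^ k) := by
      rw [add_comm (1 : ℂ) (z / n), add_pow, Finset.mul_sum]
      apply Finset.sum_congr rfl
      intro k _
      push_cast
      ring
    rw [step1]
    apply Finset.sum_subset
    · intro k hkk
      simp only [Finset.mem_range] at hkk ⊢
      have := Finset.mem_range.mp hh
      omega
    · intro k _ hk2
      have hlt : h < k := by
        simp only [Finset.mem_range, not_lt] at hk2
        omega
      rw [Nat.choose_eq_zero_of_lt hlt]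
      simp
  rw [Finset.sum_congr rfl expand, Finset.sum_comm]
  apply Finset.sum_congr rfl
  intro k hkmem
  have hkn : k ≤ n := Nat.lt_succ_iff.mp (Finset.mem_range.mp hkmem)
  have h1 : ∑ h ∈ range (n + 1), (succProb P X n h : ℂ) * ((h.choose k : ℂ) * (z / n) ^ k)
      = ((∑ h ∈ range (n + 1), (h.choose k : ℝ) * succProb P X n h : ℝ) : ℂ) * (z / n) ^ k := by
    push_cast
    rw [Finset.sum_mul]
    apply Finset.sum_congr rfl
    intros
    ring
  rw [h1, dF4_L1_real P X hX01 hXmeas hexch hkn]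
  push_cast
  rw [div_pow]
  field_simp

private lemma dF4_c_le {n k : ℕ} (hn : 1 ≤ n) :
    (n.choose k : ℝ) / (n : ℝ) ^ k ≤ (k.factorial : ℝ)⁻¹ := by
  have hnat : k.factorial * n.choose k ≤ n ^ k := by
    rw [← Nat.descFactorial_eq_factorial_mul_choose]; exact Nat.descFactorial_le_pow n k
  have hr : (k.factorial : ℝ) * (n.choose k : ℝ) ≤ (n : ℝ) ^ k := by exact_mod_cast hnat
  have hnp : (0 : ℝ) < (n : ℝ) ^ k := pow_pos (by exact_mod_cast hn) k
  have hf : (0 : ℝ) < (k.factorial : ℝ) := by exact_mod_cast k.factorial_pos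
  rw [div_le_iff₀ hnp, ← div_eq_inv_mul, le_div_iff₀ hf]
  linarith [hr]

private lemma dF4_c_tendsto (k : ℕ) :
    Tendsto (fun n : ℕ => (n.choose k : ℝ) / (n : ℝ) ^ k) atTop (𝓝 ((k.factorial : ℝ)⁻¹)) := by
  have h1 : Tendsto (fun n : ℕ => (∏ i ∈ range k, (1 - (i : ℝ) / (n : ℝ))) * (k.factorial : ℝ)⁻¹)
      atTop (𝓝 ((k.factorial : ℝ)⁻¹)) := by
    have h2 : Tendsto (fun n : ℕ => ∏ i ∈ range k, (1 - (i : ℝ) / (n : ℝ))) atTop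
        (𝓝 (∏ _i ∈ range k, (1 : ℝ))) := by
      apply tendsto_finset_prod
      intro i _
      simpa using tendsto_const_nhds.sub (tendsto_const_div_atTop_nhds_zero_nat (i : ℝ))
    simpa using h2.mul_const _
  apply h1.congr'
  filter_upwards [eventually_ge_atTop (max k 1)] with n hn
  have hk : k ≤ n := le_trans (le_max_left _ _) hn
  have hn1 : 1 ≤ n := le_trans (le_max_right _ _) hn
  have hne : ((n : ℝ)) ≠ 0 := by positivity
  have hprod : (k.factorial : ℝ) * (n.choose k : ℝ) = ∏ i ∈ range k, ((n : ℝ) - i) := by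
    have h3 := Nat.descFactorial_eq_factorial_mul_choose n k
    have h2 : (n.descFactorial k : ℝ) = ∏ i ∈ range k, ((n : ℝ) - i) := by
      rw [Nat.descFactorial_eq_prod_range, Nat.cast_prod]
      apply Finset.prod_congr rfl
      intro i hi
      rw [Nat.cast_sub (le_of_lt (lt_of_lt_of_le (Finset.mem_range.mp hi) hk))]
    rw [← h2, h3, Nat.cast_mul]
  have hsplit : ∏ i ∈ range k, (1 - (i : ℝ) / n) = (∏ i ∈ range k, ((n : ℝ) - i)) / (n : ℝ) ^ k := by
    have h4 : ∀ i ∈ range k, (1 - (i : ℝ) / n) = ((n : ℝ) - i) / n := by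
      intro i _
      rw [sub_div, div_self hne]
    rw [Finset.prod_congr rfl h4, Finset.prod_div_distrib, Finset.prod_const, Finset.card_range]
  rw [hsplit, ← hprod]
  have hfact : (k.factorial : ℝ) ≠ 0 := by exact_mod_cast k.factorial_ne_zero
  field_simp

end Aux

/-- the entire function `Ω(1+z) = ∑_{h=0}^∞ ω_h^(h) z^h / h!` is well defined
(the series converges for all `z ∈ ℂ`), and `z ↦ Ω_n(1 + z/n)` converges to `z ↦ Ω(1+z)`
uniformly on every compact subset of `ℂ`. -/
theorem deFinetti_stmt4 {Ω : Type*} [MeasurableSpace Ω] (P : Measure Ω)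
    [IsProbabilityMeasure P] (X : ℕ → Ω → ℕ)
    (hX01 : ∀ k ω, X k ω ≤ 1) (hXmeas : ∀ k, Measurable (X k))
    (hexch : Exchangeable P X) :
    (∀ z : ℂ, Summable fun h : ℕ => (allOnes P X h : ℂ) * z ^ h / (h.factorial : ℂ)) ∧
      ∀ K : Set ℂ, IsCompact K →
        TendstoUniformlyOn (fun (n : ℕ) (z : ℂ) => genPoly P X n (1 + z / n))
          (fun z => ∑' h : ℕ, (allOnes P X h : ℂ) * z ^ h / (h.factorial : ℂ))
          atTop K := by
  classical
  have ha0 : ∀ h, 0 ≤ allOnes P X h := fun h => ENNReal.toReal_nonneg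
  have ha1 : ∀ h, allOnes P X h ≤ 1 := by
    intro h
    have := prob_le_one (μ := P) (s := {ω | ∀ i < h, X i ω = 1})
    calc allOnes P X h ≤ (1 : ENNReal).toReal := ENNReal.toReal_mono (by norm_num) this
    _ = 1 := by simp
  -- summability
  have hsummable : ∀ z : ℂ,
      Summable fun h : ℕ => (allOnes P X h : ℂ) * z ^ h / (h.factorial : ℂ) := by
    intro z
    apply Summable.of_norm_bounded (g := fun h : ℕ => ‖z‖ ^ h / (h.factorial : ℝ))
      (Real.summable_pow_div_factorial ‖z‖)
    intro h
    rw [norm_div, norm_mul, Complex.norm_natCast, Complex.norm_real, norm_pow]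
    rw [Real.norm_eq_abs, abs_of_nonneg (ha0 h)]
    have hp : (0 : ℝ) < (h.factorial : ℝ) := by exact_mod_cast h.factorial_pos
    have hmul : allOnes P X h * ‖z‖ ^ h ≤ ‖z‖ ^ h :=
      mul_le_of_le_one_left (pow_nonneg (norm_nonneg z) h) (ha1 h)
    exact (div_le_div_iff_of_pos_right hp).mpr hmul
  refine ⟨hsummable, ?_⟩
  intro K hK
  obtain ⟨r, hr⟩ := hK.isBounded.subset_closedBall 0
  set R : ℝ := max r 0 with hR
  have hR0 : 0 ≤ R := le_max_right _ _
  have hRz : ∀ z ∈ K, ‖z‖ ≤ R := by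
    intro z hz
    have := hr hz
    rw [Metric.mem_closedBall, dist_zero_right] at this
    exact le_trans this (le_max_left _ _)
  set cc : ℕ → ℕ → ℝ := fun n k => if k ≤ n then (n.choose k : ℝ) / (n : ℝ) ^ k else 0 with hcc
  set d : ℕ → ℕ → ℝ := fun n k => |cc n k - (k.factorial : ℝ)⁻¹| with hd
  have hfpos : ∀ k : ℕ, (0 : ℝ) < (k.factorial : ℝ) := fun k => by exact_mod_cast k.factorial_pos
  have hccle : ∀ n, 1 ≤ n → ∀ k, 0 ≤ cc n k ∧ cc n k ≤ (k.factorial : ℝ)⁻¹ := by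
    intro n hn k
    by_cases h : k ≤ n
    · refine ⟨by simp only [hcc, if_pos h]; positivity, ?_⟩
      simp only [hcc, if_pos h]
      exact dF4_c_le hn
    · simp only [hcc, if_neg h]
      exact ⟨le_refl 0, by positivity⟩
  have hdle : ∀ n, 1 ≤ n → ∀ k, d n k ≤ 2 * (k.factorial : ℝ)⁻¹ := by
    intro n hn k
    obtain ⟨h0, h1⟩ := hccle n hn k
    have hi : (0 : ℝ) ≤ (k.factorial : ℝ)⁻¹ := by positivity
    rw [hd, abs_le]
    constructor <;> nlinarith
  have hsum2 : Summable (fun k : ℕ => 2 * (k.factorial : ℝ)⁻¹ * R ^ k) := by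
    apply ((Real.summable_pow_div_factorial R).mul_left 2).congr
    intro k
    rw [div_eq_mul_inv]
    ring
  have hsumd : ∀ n, 1 ≤ n → Summable (fun k => d n k * R ^ k) := by
    intro n hn
    apply Summable.of_nonneg_of_le (fun k => mul_nonneg (abs_nonneg _) (pow_nonneg hR0 k))
      (fun k => mul_le_mul_of_nonneg_right (hdle n hn k) (pow_nonneg hR0 k)) hsum2
  set bound : ℕ → ℝ := fun n => ∑' k, d n k * R ^ k with hbound
  have hbound0 : Tendsto bound atTop (𝓝 0) := by
    have h0 : (0 : ℝ) = ∑' _k : ℕ, (0 : ℝ) := by simp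
    rw [h0]
    apply tendsto_tsum_of_dominated_convergence hsum2
    · intro k
      have hevk : (fun n : ℕ => (n.choose k : ℝ) / (n : ℝ) ^ k) =ᶠ[atTop] fun n => cc n k := by
        filter_upwards [eventually_ge_atTop k] with n hn
        simp [hcc, hn]
      have hcct : Tendsto (fun n => cc n k) atTop (𝓝 ((k.factorial : ℝ)⁻¹)) :=
        (dF4_c_tendsto k).congr' hevk
      have hdt : Tendsto (fun n => d n k) atTop (𝓝 0) := by
        have := (hcct.sub_const ((k.factorial : ℝ)⁻¹)).abs
        simpa [hd] using this
      simpa using hdt.mul_const (R ^ k)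
    · filter_upwards [eventually_ge_atTop 1] with n hn
      intro k
      rw [Real.norm_eq_abs, abs_of_nonneg (mul_nonneg (abs_nonneg _) (pow_nonneg hR0 k))]
      exact mul_le_mul_of_nonneg_right (hdle n hn k) (pow_nonneg hR0 k)
  have key : ∀ n, 1 ≤ n → ∀ z ∈ K,
      ‖genPoly P X n (1 + z / n)
        - ∑' h : ℕ, (allOnes P X h : ℂ) * z ^ h / (h.factorial : ℂ)‖ ≤ bound n := by
    intro n hn z hz
    set F : ℕ → ℂ := fun k => (allOnes P X k : ℂ) * ((cc n k : ℝ) : ℂ) * z ^ k with hF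
    set G : ℕ → ℂ := fun k => (allOnes P X k : ℂ) * z ^ k / (k.factorial : ℂ) with hG
    have hFfin : ∀ k ∉ Finset.range (n + 1), F k = 0 := by
      intro k hk
      have hkn : ¬ k ≤ n := by simpa [Nat.lt_succ_iff] using hk
      simp [hF, hcc, hkn]
    have hFsum : Summable F := summable_of_ne_finset_zero hFfin
    have hGsum : Summable G := hsummable z
    have hgen : genPoly P X n (1 + z / n) = ∑' k, F k := by
      rw [tsum_eq_sum hFfin, dF4_L2 P X hX01 hXmeas hexch hn z]
      apply Finset.sum_congr rfl
      intro k hk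
      have hkn : k ≤ n := Nat.lt_succ_iff.mp (Finset.mem_range.mp hk)
      simp [hF, hcc, hkn]
    have hdiff : genPoly P X n (1 + z / n) - (∑' k, G k) = ∑' k, (F k - G k) := by
      rw [hgen, Summable.tsum_sub hFsum hGsum]
    have hterm : ∀ k, ‖F k - G k‖ ≤ d n k * R ^ k := by
      intro k
      have heq : F k - G k
          = ((allOnes P X k : ℝ) : ℂ) * (((cc n k - (k.factorial : ℝ)⁻¹ : ℝ)) : ℂ) * z ^ k := by
        simp only [hF, hG]
        push_cast
        ring
      rw [heq, norm_mul, norm_mul, Complex.norm_real, Complex.norm_real, norm_pow,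
        Real.norm_eq_abs, Real.norm_eq_abs, abs_of_nonneg (ha0 k)]
      have hzR : ‖z‖ ^ k ≤ R ^ k := pow_le_pow_left₀ (norm_nonneg z) (hRz z hz) k
      calc allOnes P X k * |cc n k - (k.factorial : ℝ)⁻¹| * ‖z‖ ^ k
          ≤ 1 * |cc n k - (k.factorial : ℝ)⁻¹| * R ^ k := by
            apply mul_le_mul (mul_le_mul_of_nonneg_right (ha1 k) (abs_nonneg _)) hzR
              (pow_nonneg (norm_nonneg z) k) (by positivity)
      _ = d n k * R ^ k := by rw [one_mul, hd]
    have hnormsum : Summable (fun k => ‖F k - G k‖) :=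
      Summable.of_nonneg_of_le (fun k => norm_nonneg _) hterm (hsumd n hn)
    calc ‖genPoly P X n (1 + z / n) - ∑' k, G k‖ = ‖∑' k, (F k - G k)‖ := by rw [hdiff]
    _ ≤ ∑' k, ‖F k - G k‖ := norm_tsum_le_tsum_norm hnormsum
    _ ≤ ∑' k, d n k * R ^ k := Summable.tsum_le_tsum hterm hnormsum (hsumd n hn)
  rw [Metric.tendstoUniformlyOn_iff]
  intro ε hε
  filter_upwards [hbound0.eventually (eventually_lt_nhds hε), eventually_ge_atTop 1]
    with n h1 h2
  intro z hz
  rw [dist_comm, dist_eq_norm]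
  exact lt_of_le_of_lt (key n h2 z hz) h1
end

section
/- Let X be an exchangeable sequence of {0,1}-valued random variables and let ψ_n(t) := Σ_{h=0}^{n} ω_h^(n) e^{i h t} (the characteristic function of the number of successes in n trials). Then the functions t ↦ ψ_n(t/n) converge, uniformly on every compact subset of ℝ, to the entire function ψ(t) := Σ_{h=0}^{∞} ω_h^(h) (i t)^h / h! (the characteristic function of the random phenomenon). -/
open MeasureTheory ProbabilityTheory Filter

/-- `ψ_n(t) = ∑_{h=0}^n ω_h^(n) e^{iht}`, the characteristic function of the number of
successes in the first `n` trials. -/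
noncomputable def charFunTrials {Ω : Type*} [MeasurableSpace Ω] (P : Measure Ω)
    (X : ℕ → Ω → ℕ) (n : ℕ) : ℝ → ℂ :=
  fun t => ∑ h ∈ Finset.range (n + 1),
    (succProb P X n h : ℂ) * Complex.exp (Complex.I * (h : ℂ) * (t : ℂ))

open Finset
open scoped ENNReal


lemma prod_sub_prod_abs_le (x y : ℕ → ℂ) (M : ℝ) (hM : 1 ≤ M) :
    ∀ k : ℕ, (∀ j < k, ‖x j‖ ≤ M) → (∀ j < k, ‖y j‖ ≤ M) →
    ‖∏ j ∈ range k, x j - ∏ j ∈ range k, y j‖ ≤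
      (∑ j ∈ range k, ‖x j - y j‖) * M ^ k := by
  intro k
  induction k with
  | zero => simp
  | succ k ih =>
    intro hx hy
    have hx' : ∀ j < k, ‖x j‖ ≤ M := fun j hj => hx j (hj.trans (Nat.lt_succ_self k))
    have hy' : ∀ j < k, ‖y j‖ ≤ M := fun j hj => hy j (hj.trans (Nat.lt_succ_self k))
    have ihk := ih hx' hy'
    have h1 : ∏ j ∈ range (k+1), x j - ∏ j ∈ range (k+1), y j
        = x k * (∏ j ∈ range k, x j - ∏ j ∈ range k, y j)
          + (x k - y k) * ∏ j ∈ range k, y j := by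
      rw [prod_range_succ, prod_range_succ]; ring
    have hM0 : (0:ℝ) ≤ M := le_trans zero_le_one hM
    have hyprod : ‖∏ j ∈ range k, y j‖ ≤ M ^ k := by
      rw [norm_prod]
      calc ∏ j ∈ range k, ‖y j‖ ≤ ∏ j ∈ range k, M :=
            Finset.prod_le_prod (fun j _ => norm_nonneg _)
              (fun j hj => hy' j (mem_range.mp hj))
        _ = M ^ k := by simp
    have hsumnn : 0 ≤ ∑ j ∈ range k, ‖x j - y j‖ :=
      Finset.sum_nonneg fun j _ => norm_nonneg _
    calc ‖∏ j ∈ range (k+1), x j - ∏ j ∈ range (k+1), y j‖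
        ≤ ‖x k‖ * ‖∏ j ∈ range k, x j - ∏ j ∈ range k, y j‖
          + ‖x k - y k‖ * ‖∏ j ∈ range k, y j‖ := by
          rw [h1]; refine le_trans (norm_add_le _ _) ?_
          simp [map_mul]
      _ ≤ M * ((∑ j ∈ range k, ‖x j - y j‖) * M ^ k)
          + ‖x k - y k‖ * M ^ k :=
          add_le_add
            (mul_le_mul (hx k (Nat.lt_succ_self k)) ihk (norm_nonneg _) hM0)
            (mul_le_mul_of_nonneg_left hyprod (norm_nonneg _))
      _ ≤ (∑ j ∈ range (k+1), ‖x j - y j‖) * M ^ (k+1) := by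
          rw [sum_range_succ, add_mul]
          have h2 : M * ((∑ j ∈ range k, ‖x j - y j‖) * M ^ k)
              = (∑ j ∈ range k, ‖x j - y j‖) * M ^ (k+1) := by ring
          rw [h2]
          gcongr
          · exact Nat.le_succ k

lemma key_est (R : ℝ) (hR : 1 ≤ R) (n : ℕ) (hn : R ≤ n) (k : ℕ) (hk : k ≤ n) (t : ℝ)
    (ht : |t| ≤ R) :
    ‖(n.choose k : ℂ) * (Complex.exp (Complex.I * ((t / n : ℝ) : ℂ)) - 1) ^ k
      - (Complex.I * (t : ℂ)) ^ k / (k.factorial : ℂ)‖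
    ≤ ((k * (R ^ 2 + 2 * k * R)) * (2 * R) ^ k / (k.factorial : ℝ)) / n := by
  have hn1 : (1 : ℝ) ≤ n := hR.trans hn
  have hn0 : (0 : ℝ) < n := zero_lt_one.trans_le hn1
  have hnne : (n : ℂ) ≠ 0 := by exact_mod_cast (ne_of_gt hn0)
  set w : ℂ := Complex.I * ((t / n : ℝ) : ℂ) with hw
  have habsw : ‖w‖ = |t| / n := by
    simp [hw, abs_div, abs_of_pos hn0]
  have hw1 : ‖w‖ ≤ 1 := by
    rw [habsw, div_le_one hn0]; exact ht.trans hn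
  set z : ℂ := Complex.exp w - 1 with hz
  have habsz : ‖z‖ ≤ 2 * |t| / n := by
    have := Complex.norm_exp_sub_one_le hw1
    rw [habsw] at this
    calc ‖z‖ ≤ 2 * (|t| / n) := this
      _ = 2 * |t| / n := by ring
  have habsz2 : ‖Complex.exp w - 1 - w‖ ≤ (|t| / n) ^ 2 := by
    have := Complex.norm_exp_sub_one_sub_id_le hw1
    rwa [habsw] at this
  set x : ℕ → ℂ := fun j => ((n - j : ℕ) : ℂ) * z with hxdef
  set y : ℕ → ℂ := fun j => Complex.I * (t : ℂ) with hydef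
  have hprodx : ∏ j ∈ range k, x j = ((k.factorial * n.choose k : ℕ) : ℂ) * z ^ k := by
    simp only [hxdef]
    rw [Finset.prod_mul_distrib, Finset.prod_const, card_range, ← Nat.cast_prod,
      ← Nat.descFactorial_eq_prod_range, Nat.descFactorial_eq_factorial_mul_choose]
  have hprody : ∏ j ∈ range k, y j = (Complex.I * (t : ℂ)) ^ k := by
    simp [hydef]
  have hkfac : (k.factorial : ℂ) ≠ 0 := by exact_mod_cast k.factorial_ne_zero
  have key : (n.choose k : ℂ) * z ^ k - (Complex.I * (t : ℂ)) ^ k / (k.factorial : ℂ)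
      = (∏ j ∈ range k, x j - ∏ j ∈ range k, y j) / (k.factorial : ℂ) := by
    rw [hprodx, hprody]
    push_cast
    field_simp
  -- bounds
  have hM : (1 : ℝ) ≤ 2 * R := by linarith
  have hxb : ∀ j < k, ‖x j‖ ≤ 2 * R := by
    intro j hj
    simp only [hxdef]
    rw [norm_mul, Complex.norm_natCast]
    calc ((n - j : ℕ) : ℝ) * ‖z‖ ≤ (n : ℝ) * (2 * |t| / n) := by
          apply mul_le_mul _ habsz (norm_nonneg _) (le_of_lt hn0)
          exact_mod_cast Nat.sub_le n j
      _ = 2 * |t| := by field_simp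
      _ ≤ 2 * R := by linarith
  have hyb : ∀ j < k, ‖y j‖ ≤ 2 * R := by
    intro j hj
    simp only [hydef, norm_mul, Complex.norm_I, Complex.norm_real, Real.norm_eq_abs, one_mul]
    linarith
  have hnzw : (n : ℂ) * w = Complex.I * (t : ℂ) := by
    rw [hw]
    push_cast
    field_simp
  have hdiff : ∀ j < k, ‖x j - y j‖ ≤ (R ^ 2 + 2 * k * R) / n := by
    intro j hj
    have hjn : j ≤ n := le_of_lt (lt_of_lt_of_le hj hk)
    have hcast : ((n - j : ℕ) : ℂ) = (n : ℂ) - (j : ℂ) := Nat.cast_sub hjn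
    have hsplit : x j - y j = ((n : ℂ) * z - Complex.I * (t : ℂ)) - (j : ℂ) * z := by
      simp only [hxdef, hydef, hcast]; ring
    have h1 : ‖(n : ℂ) * z - Complex.I * (t : ℂ)‖ ≤ R ^ 2 / n := by
      have heq : (n : ℂ) * z - Complex.I * (t : ℂ)
          = (n : ℂ) * (Complex.exp w - 1 - w) := by
        rw [hz]; rw [← hnzw]; ring
      rw [heq, norm_mul, Complex.norm_natCast]
      calc (n : ℝ) * ‖Complex.exp w - 1 - w‖ ≤ (n : ℝ) * (|t| / n) ^ 2 :=
            mul_le_mul_of_nonneg_left habsz2 (le_of_lt hn0)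
        _ = |t| ^ 2 / n := by field_simp
        _ ≤ R ^ 2 / n := by
            gcongr
    have h2 : ‖(j : ℂ) * z‖ ≤ 2 * k * R / n := by
      rw [norm_mul, Complex.norm_natCast]
      calc (j : ℝ) * ‖z‖ ≤ (k : ℝ) * (2 * |t| / n) := by
            apply mul_le_mul _ habsz (norm_nonneg _) (Nat.cast_nonneg k)
            exact_mod_cast le_of_lt hj
        _ ≤ (k : ℝ) * (2 * R / n) := by
            gcongr
        _ = 2 * k * R / n := by ring
    calc ‖x j - y j‖
        ≤ ‖(n : ℂ) * z - Complex.I * (t : ℂ)‖ + ‖(j : ℂ) * z‖ := by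
          rw [hsplit]
          exact norm_sub_le _ _
      _ ≤ R ^ 2 / n + 2 * k * R / n := add_le_add h1 h2
      _ = (R ^ 2 + 2 * k * R) / n := by ring
  have hmain := prod_sub_prod_abs_le x y (2 * R) hM k hxb hyb
  have hsum : ∑ j ∈ range k, ‖x j - y j‖ ≤ k * ((R ^ 2 + 2 * k * R) / n) := by
    calc ∑ j ∈ range k, ‖x j - y j‖
        ≤ ∑ j ∈ range k, (R ^ 2 + 2 * k * R) / n :=
          Finset.sum_le_sum fun j hj => hdiff j (mem_range.mp hj)
      _ = k * ((R ^ 2 + 2 * k * R) / n) := by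
          rw [Finset.sum_const, card_range]; ring
  have hgoal : ‖(n.choose k : ℂ) * z ^ k - (Complex.I * (t : ℂ)) ^ k / (k.factorial : ℂ)‖
      ≤ (k * ((R ^ 2 + 2 * k * R) / n)) * (2 * R) ^ k / (k.factorial : ℝ) := by
    rw [key, norm_div, Complex.norm_natCast]
    gcongr
    exact hmain.trans (mul_le_mul_of_nonneg_right hsum (pow_nonneg (by linarith) k))
  have hE : ((k : ℝ) * ((R ^ 2 + 2 * k * R) / n)) * (2 * R) ^ k / (k.factorial : ℝ)
      = ((k * (R ^ 2 + 2 * k * R)) * (2 * R) ^ k / (k.factorial : ℝ)) / n := by ring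
  exact le_of_le_of_eq hgoal hE

lemma sum_est_bound (R : ℝ) (hR : 1 ≤ R) (m : ℕ) :
    ∑ k ∈ range m, (k * (R ^ 2 + 2 * k * R)) * (2 * R) ^ k / (k.factorial : ℝ)
      ≤ R ^ 2 * Real.exp (4 * R) + 2 * R * Real.exp (8 * R) := by
  have hR0 : (0 : ℝ) ≤ R := le_trans zero_le_one hR
  have h2R : (0 : ℝ) ≤ 2 * R := by linarith
  have termle : ∀ k : ℕ, (k * (R ^ 2 + 2 * k * R)) * (2 * R) ^ k / (k.factorial : ℝ)
      ≤ R ^ 2 * ((4 * R) ^ k / (k.factorial : ℝ)) + 2 * R * ((8 * R) ^ k / (k.factorial : ℝ)) := by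
    intro k
    have hk2 : (k : ℝ) ≤ 2 ^ k := by exact_mod_cast (Nat.lt_two_pow_self (n := k)).le
    have hp : (0 : ℝ) ≤ (2 * R) ^ k := pow_nonneg h2R k
    have e1 : (k : ℝ) * (2 * R) ^ k ≤ (4 * R) ^ k := by
      calc (k : ℝ) * (2 * R) ^ k ≤ 2 ^ k * (2 * R) ^ k := mul_le_mul_of_nonneg_right hk2 hp
        _ = (4 * R) ^ k := by rw [← mul_pow]; ring_nf
    have e2 : (k : ℝ) ^ 2 * (2 * R) ^ k ≤ (8 * R) ^ k := by
      have hk4 : (k : ℝ) ^ 2 ≤ 4 ^ k := by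
        calc (k : ℝ) ^ 2 ≤ (2 ^ k : ℝ) ^ 2 := by
              apply pow_le_pow_left₀ (Nat.cast_nonneg k) hk2
          _ = 4 ^ k := by rw [← pow_mul, pow_mul']; norm_num
      calc (k : ℝ) ^ 2 * (2 * R) ^ k ≤ 4 ^ k * (2 * R) ^ k :=
            mul_le_mul_of_nonneg_right hk4 hp
        _ = (8 * R) ^ k := by rw [← mul_pow]; ring_nf
    have hnum : (k * (R ^ 2 + 2 * k * R)) * (2 * R) ^ k
        ≤ R ^ 2 * (4 * R) ^ k + 2 * R * (8 * R) ^ k := by nlinarith [e1, e2]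
    have hfac : (0 : ℝ) < (k.factorial : ℝ) := by exact_mod_cast k.factorial_pos
    calc (k * (R ^ 2 + 2 * k * R)) * (2 * R) ^ k / (k.factorial : ℝ)
        ≤ (R ^ 2 * (4 * R) ^ k + 2 * R * (8 * R) ^ k) / (k.factorial : ℝ) := by gcongr
      _ = R ^ 2 * ((4 * R) ^ k / (k.factorial : ℝ))
          + 2 * R * ((8 * R) ^ k / (k.factorial : ℝ)) := by ring
  calc ∑ k ∈ range m, (k * (R ^ 2 + 2 * k * R)) * (2 * R) ^ k / (k.factorial : ℝ)
      ≤ ∑ k ∈ range m, (R ^ 2 * ((4 * R) ^ k / (k.factorial : ℝ))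
          + 2 * R * ((8 * R) ^ k / (k.factorial : ℝ))) :=
        Finset.sum_le_sum fun k _ => termle k
    _ = R ^ 2 * ∑ k ∈ range m, (4 * R) ^ k / (k.factorial : ℝ)
        + 2 * R * ∑ k ∈ range m, (8 * R) ^ k / (k.factorial : ℝ) := by
        rw [Finset.sum_add_distrib, Finset.mul_sum, Finset.mul_sum]
    _ ≤ R ^ 2 * Real.exp (4 * R) + 2 * R * Real.exp (8 * R) := by
        gcongr
        · exact Real.sum_le_exp_of_nonneg (by linarith) m
        · exact Real.sum_le_exp_of_nonneg (by linarith) m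


lemma measure_allOnes_finset {Ω : Type*} [MeasurableSpace Ω] (P : Measure Ω) (X : ℕ → Ω → ℕ)
    (hXmeas : ∀ k, Measurable (X k)) (hexch : Exchangeable P X)
    {n k : ℕ} (A : Finset ℕ) (hA : A ⊆ Finset.range n) (hcard : A.card = k) :
    P {ω | ∀ i ∈ A, X i ω = 1} = P {ω | ∀ i < k, X i ω = 1} := by
  classical
  have hkn : k ≤ n := by
    rw [← hcard]
    simpa using Finset.card_le_card hA
  have hAlt : ∀ m ∈ A, m < n := fun m hm => Finset.mem_range.mp (hA hm)
  set A' : Finset (Fin n) := A.attachFin hAlt with hA'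
  have hBlt : ∀ m ∈ Finset.range k, m < n := fun m hm =>
    lt_of_lt_of_le (Finset.mem_range.mp hm) hkn
  set B' : Finset (Fin n) := (Finset.range k).attachFin hBlt with hB'
  have hcardA' : A'.card = k := by rw [hA', Finset.card_attachFin, hcard]
  have hcardB' : B'.card = k := by rw [hB', Finset.card_attachFin, Finset.card_range]
  have e : {x : Fin n // x ∈ B'} ≃ {x : Fin n // x ∈ A'} :=
    Fintype.equivOfCardEq (by
      rw [Fintype.card_coe, Fintype.card_coe, hcardA', hcardB'])
  have ec : {x : Fin n // ¬ x ∈ B'} ≃ {x : Fin n // ¬ x ∈ A'} :=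
    Fintype.equivOfCardEq (by
      rw [Fintype.card_subtype_compl, Fintype.card_subtype_compl]
      congr 1
      rw [Fintype.card_coe, Fintype.card_coe, hcardA', hcardB'])
  set σ : Equiv.Perm (Fin n) :=
    (Equiv.sumCompl (· ∈ B')).symm.trans ((e.sumCongr ec).trans (Equiv.sumCompl (· ∈ A'))) with hσ
  have hσmem : ∀ i : Fin n, σ i ∈ A' ↔ i ∈ B' := by
    intro i
    by_cases hi : i ∈ B'
    · have : σ i = (e ⟨i, hi⟩ : Fin n) := by
        simp [hσ, Equiv.sumCompl_symm_apply_of_pos hi]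
      rw [this]
      exact iff_of_true (e ⟨i, hi⟩).2 hi
    · have : σ i = (ec ⟨i, hi⟩ : Fin n) := by
        simp [hσ, Equiv.sumCompl_symm_apply_of_neg hi]
      rw [this]
      exact iff_of_false (ec ⟨i, hi⟩).2 hi
  set T : Set (Fin n → ℕ) := {f | ∀ i : Fin n, (i : ℕ) < k → f i = 1} with hT
  have hTmeas : MeasurableSet T := by
    have hTeq : T = ⋂ i : Fin n, {f : Fin n → ℕ | (i : ℕ) < k → f i = 1} := by
      ext f; simp [hT, Set.mem_iInter]
    rw [hTeq]
    refine MeasurableSet.iInter fun i => ?_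
    by_cases h : (i : ℕ) < k
    · have : {f : Fin n → ℕ | (i : ℕ) < k → f i = 1}
          = (fun f : Fin n → ℕ => f i) ⁻¹' {1} := by ext f; simp [h]
      rw [this]
      exact measurable_pi_apply i (measurableSet_singleton 1)
    · have : {f : Fin n → ℕ | (i : ℕ) < k → f i = 1} = Set.univ := by ext f; simp [h]
      rw [this]
      exact MeasurableSet.univ
  have hmeasσ : Measurable fun ω => fun i : Fin n => X (σ i) ω :=
    measurable_pi_lambda _ fun i => hXmeas _
  have hmeasid : Measurable fun ω => fun i : Fin n => X i ω :=
    measurable_pi_lambda _ fun i => hXmeas _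
  have h1 : P ((fun ω => fun i : Fin n => X (σ i) ω) ⁻¹' T)
      = P ((fun ω => fun i : Fin n => X i ω) ⁻¹' T) := by
    rw [← Measure.map_apply hmeasσ hTmeas, ← Measure.map_apply hmeasid hTmeas, hexch n σ]
  have hpre1 : (fun ω => fun i : Fin n => X (σ i) ω) ⁻¹' T = {ω | ∀ i ∈ A, X i ω = 1} := by
    ext ω
    simp only [Set.mem_preimage, hT, Set.mem_setOf_eq]
    constructor
    · intro h a ha
      have han : a < n := hAlt a ha
      have haA' : (⟨a, han⟩ : Fin n) ∈ A' := by
        rw [hA']; exact (Finset.mem_attachFin hAlt).mpr ha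
      have hiB : σ.symm ⟨a, han⟩ ∈ B' := by
        apply (hσmem (σ.symm ⟨a, han⟩)).mp
        rw [Equiv.apply_symm_apply]
        exact haA'
      have hik : ((σ.symm ⟨a, han⟩ : Fin n) : ℕ) < k := by
        have := (Finset.mem_attachFin hBlt).mp (hB' ▸ hiB)
        exact Finset.mem_range.mp this
      have := h (σ.symm ⟨a, han⟩) hik
      rwa [Equiv.apply_symm_apply] at this
    · intro h i hik
      have hiB : i ∈ B' := by
        rw [hB']; exact (Finset.mem_attachFin hBlt).mpr (Finset.mem_range.mpr hik)
      have hσA : σ i ∈ A' := (hσmem i).mpr hiB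
      exact h _ ((Finset.mem_attachFin hAlt).mp (hA' ▸ hσA))
  have hpre2 : (fun ω => fun i : Fin n => X i ω) ⁻¹' T = {ω | ∀ i < k, X i ω = 1} := by
    ext ω
    simp only [Set.mem_preimage, hT, Set.mem_setOf_eq]
    constructor
    · intro h i hik
      exact h ⟨i, lt_of_lt_of_le hik hkn⟩ hik
    · intro h i hik
      exact h i hik
  rw [hpre1, hpre2] at h1
  exact h1

lemma moment_identity_ennreal {Ω : Type*} [MeasurableSpace Ω] (P : Measure Ω) (X : ℕ → Ω → ℕ)
    (hX01 : ∀ k ω, X k ω ≤ 1) (hXmeas : ∀ k, Measurable (X k)) (hexch : Exchangeable P X)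
    {n k : ℕ} (hk : k ≤ n) :
    ∑ h ∈ Finset.range (n + 1),
        (h.choose k : ℝ≥0∞) * P {ω | ∑ i ∈ Finset.range n, X i ω = h}
      = (n.choose k : ℝ≥0∞) * P {ω | ∀ i < k, X i ω = 1} := by
  classical
  set S : Ω → ℕ := fun ω => ∑ i ∈ Finset.range n, X i ω with hS
  have hSmeas : Measurable S := Finset.measurable_sum _ fun i _ => hXmeas i
  have hSle : ∀ ω, S ω ≤ n := by
    intro ω
    calc S ω ≤ ∑ i ∈ Finset.range n, 1 := Finset.sum_le_sum fun i _ => hX01 i ω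
      _ = n := by simp
  have hEmeas : ∀ A : Finset ℕ, MeasurableSet {ω | ∀ i ∈ A, X i ω = 1} := by
    intro A
    have : {ω | ∀ i ∈ A, X i ω = 1} = ⋂ i ∈ A, (X i) ⁻¹' {1} := by ext ω; simp
    rw [this]
    exact MeasurableSet.biInter (A : Set ℕ).to_countable
      fun i _ => hXmeas i (measurableSet_singleton 1)
  have hShmeas : ∀ h : ℕ, MeasurableSet {ω | S ω = h} :=
    fun h => hSmeas (measurableSet_singleton h)
  set 𝒜 : Finset (Finset ℕ) := (Finset.range n).powersetCard k with h𝒜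
  -- Step 1 : sum over 𝒜 is the RHS
  have step1 : ∑ A ∈ 𝒜, P {ω | ∀ i ∈ A, X i ω = 1}
      = (n.choose k : ℝ≥0∞) * P {ω | ∀ i < k, X i ω = 1} := by
    have : ∀ A ∈ 𝒜, P {ω | ∀ i ∈ A, X i ω = 1} = P {ω | ∀ i < k, X i ω = 1} := by
      intro A hA
      obtain ⟨hsub, hcard⟩ := Finset.mem_powersetCard.mp hA
      exact measure_allOnes_finset P X hXmeas hexch A hsub hcard
    rw [Finset.sum_congr rfl this, Finset.sum_const, h𝒜, Finset.card_powersetCard,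
      Finset.card_range, nsmul_eq_mul]
  -- Step 2 : pointwise counting
  have pointwise : ∀ ω, ∑ A ∈ 𝒜, Set.indicator {ω' | ∀ i ∈ A, X i ω' = 1}
        (fun _ => (1 : ℝ≥0∞)) ω = ((S ω).choose k : ℝ≥0∞) := by
    intro ω
    set sA : Finset ℕ := (Finset.range n).filter (fun i => X i ω = 1) with hsA
    have hcard : sA.card = S ω := by
      rw [hsA, Finset.card_filter, hS]
      apply Finset.sum_congr rfl
      intro i _
      by_cases hXi : X i ω = 1
      · simp [hXi]
      · have h0 : X i ω = 0 := (Nat.le_one_iff_eq_zero_or_eq_one.mp (hX01 i ω)).resolve_right hXi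
        simp [hXi, h0]
    have hsum : ∑ A ∈ 𝒜, Set.indicator {ω' | ∀ i ∈ A, X i ω' = 1} (fun _ => (1 : ℝ≥0∞)) ω
        = ((𝒜.filter fun A => ∀ i ∈ A, X i ω = 1).card : ℝ≥0∞) := by
      rw [Finset.card_filter]
      push_cast
      apply Finset.sum_congr rfl
      intro A _
      rw [Set.indicator_apply]
      simp only [Set.mem_setOf_eq]
    have hfilter : 𝒜.filter (fun A => ∀ i ∈ A, X i ω = 1) = sA.powersetCard k := by
      ext A
      simp only [Finset.mem_filter, h𝒜, Finset.mem_powersetCard, hsA]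
      constructor
      · rintro ⟨⟨hsub, hcard'⟩, hall⟩
        exact ⟨fun i hi => Finset.mem_filter.mpr ⟨hsub hi, hall i hi⟩, hcard'⟩
      · rintro ⟨hsub, hcard'⟩
        refine ⟨⟨fun i hi => (Finset.mem_filter.mp (hsub hi)).1, hcard'⟩,
          fun i hi => (Finset.mem_filter.mp (hsub hi)).2⟩
    rw [hsum, hfilter, Finset.card_powersetCard, hcard]
  -- Step 3 : expectation computation
  have step3 : ∑ A ∈ 𝒜, P {ω | ∀ i ∈ A, X i ω = 1}
      = ∑ h ∈ Finset.range (n + 1), (h.choose k : ℝ≥0∞) * P {ω | S ω = h} := by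
    have lhs_eq : ∑ A ∈ 𝒜, P {ω | ∀ i ∈ A, X i ω = 1}
        = ∫⁻ ω, ((S ω).choose k : ℝ≥0∞) ∂P := by
      have : ∀ A ∈ 𝒜, P {ω | ∀ i ∈ A, X i ω = 1}
          = ∫⁻ ω, Set.indicator {ω' | ∀ i ∈ A, X i ω' = 1} (fun _ => (1 : ℝ≥0∞)) ω ∂P := by
        intro A _
        exact (lintegral_indicator_one (hEmeas A)).symm
      rw [Finset.sum_congr rfl this, ← lintegral_finset_sum]
      · exact lintegral_congr fun ω => pointwise ω
      · intro A _
        exact (measurable_const).indicator (hEmeas A)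
    have rhs_eq : ∫⁻ ω, ((S ω).choose k : ℝ≥0∞) ∂P
        = ∑ h ∈ Finset.range (n + 1), (h.choose k : ℝ≥0∞) * P {ω | S ω = h} := by
      have pt : ∀ ω, ((S ω).choose k : ℝ≥0∞)
          = ∑ h ∈ Finset.range (n + 1),
              (h.choose k : ℝ≥0∞) * Set.indicator {ω' | S ω' = h} (fun _ => (1 : ℝ≥0∞)) ω := by
        intro ω
        have hmem : S ω ∈ Finset.range (n + 1) := Finset.mem_range.mpr (Nat.lt_succ_of_le (hSle ω))
        rw [Finset.sum_congr rfl (fun h _ => ?_), Finset.sum_ite_eq' (Finset.range (n+1)) (S ω)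
          (fun h => (h.choose k : ℝ≥0∞)), if_pos hmem]
        rw [Set.indicator_apply]
        simp only [Set.mem_setOf_eq]
        by_cases hh : S ω = h
        · simp [hh]
        · simp [hh, Ne.symm hh]
      rw [lintegral_congr pt, lintegral_finset_sum]
      · apply Finset.sum_congr rfl
        intro h _
        rw [lintegral_const_mul _ ((measurable_const).indicator (hShmeas h))]
        congr 1
        exact lintegral_indicator_one (hShmeas h)
      · intro h _
        exact measurable_const.mul ((measurable_const).indicator (hShmeas h))
    rw [lhs_eq, rhs_eq]
  rw [← step1, step3]

lemma moment_identity_real {Ω : Type*} [MeasurableSpace Ω] (P : Measure Ω) (X : ℕ → Ω → ℕ)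
    [IsFiniteMeasure P]
    (hX01 : ∀ k ω, X k ω ≤ 1) (hXmeas : ∀ k, Measurable (X k)) (hexch : Exchangeable P X)
    {n k : ℕ} (hk : k ≤ n) :
    ∑ h ∈ Finset.range (n + 1), (h.choose k : ℝ) * succProb P X n h
      = (n.choose k : ℝ) * allOnes P X k := by
  have key := moment_identity_ennreal P X hX01 hXmeas hexch hk
  have := congrArg ENNReal.toReal key
  rw [ENNReal.toReal_sum (fun h _ => ENNReal.mul_ne_top (ENNReal.natCast_ne_top _)
    (measure_ne_top P _)), ENNReal.toReal_mul] at this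
  simp only [ENNReal.toReal_mul, ENNReal.toReal_natCast] at this
  simpa [succProb, allOnes] using this

lemma charFun_rewrite {Ω : Type*} [MeasurableSpace Ω] (P : Measure Ω) (X : ℕ → Ω → ℕ)
    [IsFiniteMeasure P]
    (hX01 : ∀ k ω, X k ω ≤ 1) (hXmeas : ∀ k, Measurable (X k)) (hexch : Exchangeable P X)
    (n : ℕ) (t : ℝ) :
    charFunTrials P X n (t / n) = ∑ k ∈ Finset.range (n + 1),
      (n.choose k : ℂ) * (allOnes P X k : ℂ)
        * (Complex.exp (Complex.I * ((t / n : ℝ) : ℂ)) - 1) ^ k := by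
  set z : ℂ := Complex.exp (Complex.I * ((t / n : ℝ) : ℂ)) - 1 with hz
  have hexp : ∀ h : ℕ, Complex.exp (Complex.I * (h : ℂ) * ((t / n : ℝ) : ℂ)) = (1 + z) ^ h := by
    intro h
    have harg : Complex.I * (h : ℂ) * ((t / n : ℝ) : ℂ)
        = (h : ℕ) * (Complex.I * ((t / n : ℝ) : ℂ)) := by push_cast; ring
    rw [harg, Complex.exp_nat_mul]
    congr 1
    rw [hz]; ring
  have hbin : ∀ h ∈ Finset.range (n + 1),
      (1 + z) ^ h = ∑ k ∈ Finset.range (n + 1), (h.choose k : ℂ) * z ^ k := by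
    intro h hh
    have h1 : (1 + z) ^ h = ∑ k ∈ Finset.range (h + 1), (h.choose k : ℂ) * z ^ k := by
      rw [add_comm, add_pow]
      apply Finset.sum_congr rfl
      intro k _
      rw [one_pow, mul_one, mul_comm]
    have hh' : h ≤ n := Finset.mem_range_succ_iff.mp hh
    rw [h1]
    apply Finset.sum_subset
    · exact Finset.range_subset_range.mpr (by omega)
    · intro k hk1 hk2
      have : h < k := by
        simp only [Finset.mem_range] at hk1 hk2
        omega
      simp [Nat.choose_eq_zero_of_lt this]
  calc charFunTrials P X n (t / n)
      = ∑ h ∈ Finset.range (n + 1), (succProb P X n h : ℂ)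
          * ∑ k ∈ Finset.range (n + 1), (h.choose k : ℂ) * z ^ k := by
        apply Finset.sum_congr rfl
        intro h hh
        rw [hexp h, hbin h hh]
    _ = ∑ k ∈ Finset.range (n + 1),
          (∑ h ∈ Finset.range (n + 1), (succProb P X n h : ℂ) * (h.choose k : ℂ)) * z ^ k := by
        simp_rw [Finset.mul_sum]
        rw [Finset.sum_comm]
        apply Finset.sum_congr rfl
        intro k _
        rw [Finset.sum_mul]
        apply Finset.sum_congr rfl
        intro h _
        ring
    _ = ∑ k ∈ Finset.range (n + 1),
          (n.choose k : ℂ) * (allOnes P X k : ℂ) * z ^ k := by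
        apply Finset.sum_congr rfl
        intro k hk
        have hkn : k ≤ n := by
          simp only [Finset.mem_range] at hk; omega
        have := moment_identity_real P X hX01 hXmeas hexch hkn
        have hcast : ∑ h ∈ Finset.range (n + 1), (succProb P X n h : ℂ) * (h.choose k : ℂ)
            = ((∑ h ∈ Finset.range (n + 1), (h.choose k : ℝ) * succProb P X n h : ℝ) : ℂ) := by
          push_cast
          apply Finset.sum_congr rfl
          intro h _
          ring
        rw [hcast, this]
        push_cast
        ring


set_option maxHeartbeats 1000000 in
/-- the functions `t ↦ ψ_n(t/n)` converge, uniformly on every compact subset of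
`ℝ`, to the entire function `ψ(t) = ∑_{h=0}^∞ ω_h^(h) (it)^h / h!` (the characteristic
function of the random phenomenon). -/
theorem deFinetti_stmt5 {Ω : Type*} [MeasurableSpace Ω] (P : Measure Ω)
    [IsProbabilityMeasure P] (X : ℕ → Ω → ℕ)
    (hX01 : ∀ k ω, X k ω ≤ 1) (hXmeas : ∀ k, Measurable (X k))
    (hexch : Exchangeable P X) :
    ∀ K : Set ℝ, IsCompact K →
      TendstoUniformlyOn (fun (n : ℕ) (t : ℝ) => charFunTrials P X n (t / n))
        (fun t => ∑' h : ℕ, (allOnes P X h : ℂ) * (Complex.I * (t : ℂ)) ^ h / (h.factorial : ℂ))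
        atTop K := by
  intro K hK
  obtain ⟨r, hrK⟩ := hK.isBounded.subset_closedBall 0
  set R : ℝ := max r 1 with hRdef
  have hR : 1 ≤ R := le_max_right r 1
  have hR0 : (0:ℝ) ≤ R := zero_le_one.trans hR
  have htK : ∀ t ∈ K, |t| ≤ R := by
    intro t ht
    have := hrK ht
    rw [Metric.mem_closedBall, Real.dist_eq, sub_zero] at this
    exact this.trans (le_max_left r 1)
  have hc0 : ∀ k, 0 ≤ allOnes P X k := fun k => ENNReal.toReal_nonneg
  have hc1 : ∀ k, allOnes P X k ≤ 1 := by
    intro k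
    calc allOnes P X k = (P {ω | ∀ i < k, X i ω = 1}).toReal := rfl
      _ ≤ (1 : ℝ≥0∞).toReal := ENNReal.toReal_mono ENNReal.one_ne_top prob_le_one
      _ = 1 := by simp
  set f : ℕ → ℝ := fun k => R ^ k / (k.factorial : ℝ) with hfdef
  have hf : Summable f := Real.summable_pow_div_factorial R
  have hu_norm : ∀ t : ℝ, |t| ≤ R → ∀ k : ℕ,
      ‖(allOnes P X k : ℂ) * (Complex.I * (t : ℂ)) ^ k / (k.factorial : ℂ)‖
        ≤ f k := by
    intro t ht k
    rw [norm_div, norm_mul, norm_pow, norm_mul]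
    simp only [Complex.norm_I, Complex.norm_real, Real.norm_eq_abs, one_mul, Complex.norm_natCast]
    rw [abs_of_nonneg (hc0 k)]
    have hnum : allOnes P X k * |t| ^ k ≤ 1 * R ^ k :=
      mul_le_mul (hc1 k) (pow_le_pow_left₀ (abs_nonneg t) ht k)
        (pow_nonneg (abs_nonneg t) k) zero_le_one
    rw [hfdef]
    have hfac : (0:ℝ) < (k.factorial : ℝ) := by exact_mod_cast k.factorial_pos
    calc allOnes P X k * |t| ^ k / (k.factorial : ℝ)
        ≤ 1 * R ^ k / (k.factorial : ℝ) := by gcongr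
      _ = R ^ k / (k.factorial : ℝ) := by ring
  have main_est : ∀ n : ℕ, R ≤ (n : ℝ) → ∀ t ∈ K,
      dist (∑' h : ℕ, (allOnes P X h : ℂ) * (Complex.I * (t : ℂ)) ^ h / (h.factorial : ℂ))
          (charFunTrials P X n (t / n))
        ≤ (R ^ 2 * Real.exp (4 * R) + 2 * R * Real.exp (8 * R)) / n
          + ∑' i, f (i + (n + 1)) := by
    intro n hn t htK'
    have ht := htK t htK'
    set u : ℕ → ℂ :=
      fun k => (allOnes P X k : ℂ) * (Complex.I * (t : ℂ)) ^ k / (k.factorial : ℂ) with hu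
    have hnorm_sum : Summable fun k => ‖u k‖ :=
      Summable.of_nonneg_of_le (fun k => norm_nonneg _)
        (fun k => by exact hu_norm t ht k) hf
    have hu_sum : Summable u := hnorm_sum.of_norm
    have hsplit := Summable.sum_add_tsum_nat_add (f := u) (n + 1) hu_sum
    set z : ℂ := Complex.exp (Complex.I * ((t / n : ℝ) : ℂ)) - 1 with hz
    have hrw := charFun_rewrite P X hX01 hXmeas hexch n t
    rw [Complex.dist_eq, hrw]
    have hgt : (∑' h : ℕ, u h)
        - ∑ k ∈ Finset.range (n + 1),
            (n.choose k : ℂ) * (allOnes P X k : ℂ) * z ^ k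
        = (∑ k ∈ Finset.range (n + 1),
            (u k - (n.choose k : ℂ) * (allOnes P X k : ℂ) * z ^ k))
          + ∑' i, u (i + (n + 1)) := by
      rw [Finset.sum_sub_distrib, ← hsplit]
      ring
    rw [hgt]
    have hterm : ∀ k ∈ Finset.range (n + 1),
        ‖u k - (n.choose k : ℂ) * (allOnes P X k : ℂ) * z ^ k‖
          ≤ ((k * (R ^ 2 + 2 * k * R)) * (2 * R) ^ k / (k.factorial : ℝ)) / n := by
      intro k hk
      have hkn : k ≤ n := Finset.mem_range_succ_iff.mp hk
      have heq : u k - (n.choose k : ℂ) * (allOnes P X k : ℂ) * z ^ k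
          = (allOnes P X k : ℂ)
            * ((Complex.I * (t : ℂ)) ^ k / (k.factorial : ℂ) - (n.choose k : ℂ) * z ^ k) := by
        rw [hu]; ring
      rw [heq, norm_mul, Complex.norm_real, Real.norm_eq_abs, abs_of_nonneg (hc0 k), norm_sub_rev]
      calc allOnes P X k
            * ‖(n.choose k : ℂ) * z ^ k
                - (Complex.I * (t : ℂ)) ^ k / (k.factorial : ℂ)‖
          ≤ 1 * ‖(n.choose k : ℂ) * z ^ k
                - (Complex.I * (t : ℂ)) ^ k / (k.factorial : ℂ)‖ :=
            mul_le_mul_of_nonneg_right (hc1 k) (norm_nonneg _)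
        _ = ‖(n.choose k : ℂ) * z ^ k
                - (Complex.I * (t : ℂ)) ^ k / (k.factorial : ℂ)‖ := one_mul _
        _ ≤ ((k * (R ^ 2 + 2 * k * R)) * (2 * R) ^ k / (k.factorial : ℝ)) / n :=
            key_est R hR n hn k hkn t ht
    have hn0 : (0:ℝ) < n := lt_of_lt_of_le (zero_lt_one.trans_le hR) hn
    have hsum1 : ∑ k ∈ Finset.range (n + 1),
          ‖u k - (n.choose k : ℂ) * (allOnes P X k : ℂ) * z ^ k‖
        ≤ (R ^ 2 * Real.exp (4 * R) + 2 * R * Real.exp (8 * R)) / n := by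
      calc ∑ k ∈ Finset.range (n + 1),
            ‖u k - (n.choose k : ℂ) * (allOnes P X k : ℂ) * z ^ k‖
          ≤ ∑ k ∈ Finset.range (n + 1),
              ((k * (R ^ 2 + 2 * k * R)) * (2 * R) ^ k / (k.factorial : ℝ)) / n :=
            Finset.sum_le_sum hterm
        _ = (∑ k ∈ Finset.range (n + 1),
              (k * (R ^ 2 + 2 * k * R)) * (2 * R) ^ k / (k.factorial : ℝ)) / n := by
            rw [Finset.sum_div]
        _ ≤ (R ^ 2 * Real.exp (4 * R) + 2 * R * Real.exp (8 * R)) / n :=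
            (div_le_div_iff_of_pos_right hn0).mpr (sum_est_bound R hR (n + 1))
    have hshift_norm : Summable fun i => ‖u (i + (n + 1))‖ :=
      (summable_nat_add_iff (n + 1)).mpr hnorm_sum
    have hshift_f : Summable fun i => f (i + (n + 1)) :=
      (summable_nat_add_iff (n + 1)).mpr hf
    have htail : ‖∑' i, u (i + (n + 1))‖ ≤ ∑' i, f (i + (n + 1)) := by
      refine (norm_tsum_le_tsum_norm hshift_norm).trans ?_
      refine Summable.tsum_le_tsum (fun i => ?_) hshift_norm hshift_f
      exact hu_norm t ht _
    calc ‖(∑ k ∈ Finset.range (n + 1),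
            (u k - (n.choose k : ℂ) * (allOnes P X k : ℂ) * z ^ k))
          + ∑' i, u (i + (n + 1))‖
        ≤ ‖∑ k ∈ Finset.range (n + 1),
            (u k - (n.choose k : ℂ) * (allOnes P X k : ℂ) * z ^ k)‖
          + ‖∑' i, u (i + (n + 1))‖ := norm_add_le _ _
      _ ≤ (∑ k ∈ Finset.range (n + 1),
            ‖u k - (n.choose k : ℂ) * (allOnes P X k : ℂ) * z ^ k‖)
          + ‖∑' i, u (i + (n + 1))‖ := by
          gcongr
          exact norm_sum_le _ _
      _ ≤ (R ^ 2 * Real.exp (4 * R) + 2 * R * Real.exp (8 * R)) / n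
          + ∑' i, f (i + (n + 1)) := add_le_add hsum1 htail
  -- limit of the error bound
  have hpart : Tendsto (fun n : ℕ => ∑ i ∈ Finset.range (n + 1), f i) atTop
      (nhds (∑' i, f i)) :=
    hf.hasSum.tendsto_sum_nat.comp (tendsto_add_atTop_nat 1)
  have hTn : Tendsto (fun n : ℕ => ∑' i, f (i + (n + 1))) atTop (nhds 0) := by
    have heq : (fun n : ℕ => ∑' i, f (i + (n + 1)))
        = fun n : ℕ => (∑' i, f i) - ∑ i ∈ Finset.range (n + 1), f i := by
      funext n
      have := Summable.sum_add_tsum_nat_add (f := f) (n + 1) hf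
      linarith
    rw [heq]
    have h0 : (0:ℝ) = (∑' i, f i) - (∑' i, f i) := by ring
    rw [h0]
    exact tendsto_const_nhds.sub hpart
  have herr : Tendsto (fun n : ℕ =>
      (R ^ 2 * Real.exp (4 * R) + 2 * R * Real.exp (8 * R)) / (n : ℝ)
        + ∑' i, f (i + (n + 1))) atTop (nhds 0) := by
    simpa using (tendsto_const_div_atTop_nhds_zero_nat
      (R ^ 2 * Real.exp (4 * R) + 2 * R * Real.exp (8 * R))).add hTn
  rw [Metric.tendstoUniformlyOn_iff]
  intro ε hε
  have h1 : ∀ᶠ n : ℕ in atTop,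
      (R ^ 2 * Real.exp (4 * R) + 2 * R * Real.exp (8 * R)) / (n : ℝ)
        + ∑' i, f (i + (n + 1)) < ε := herr.eventually (gt_mem_nhds hε)
  obtain ⟨N, hN⟩ := exists_nat_ge R
  filter_upwards [h1, eventually_ge_atTop N] with n hn1 hn2
  intro t ht
  have hRn : R ≤ (n : ℝ) := hN.trans (by exact_mod_cast hn2)
  exact lt_of_le_of_lt (main_est n hRn t ht) hn1
end

section
/- (de Finetti representation) Let X be an exchangeable sequence of {0,1}-valued random variables. Then there exists a probability measure μ on the interval [0,1] such that for every n ≥ 1 and 0 ≤ h ≤ n, ω_h^(n) = C(n,h) · ∫₀¹ ξ^h (1−ξ)^{n−h} dμ(ξ). -/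
open MeasureTheory ProbabilityTheory Filter
open scoped Topology ENNReal

section Aux

variable {Ω : Type*} [MeasurableSpace Ω] (P : Measure Ω) (X : ℕ → Ω → ℕ)

lemma exists_perm_extend {m n : ℕ} (hmn : m ≤ n) (g : Fin m → Fin n)
    (hg : Function.Injective g) :
    ∃ σ : Equiv.Perm (Fin n), ∀ i : Fin m, σ (Fin.castLE hmn i) = g i := by
  classical
  have hinj : Function.Injective (Fin.castLE hmn) := Fin.castLE_injective hmn
  let e : {x : Fin n // x ∈ Set.range (Fin.castLE hmn)} ≃ {x : Fin n // x ∈ Set.range g} :=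
    (Equiv.ofInjective _ hinj).symm.trans (Equiv.ofInjective g hg)
  refine ⟨e.extendSubtype, fun i => ?_⟩
  rw [e.extendSubtype_apply_of_mem _ ⟨i, rfl⟩]
  simp [e]

lemma map_tuple_eq (hXmeas : ∀ k, Measurable (X k)) (hexch : Exchangeable P X)
    (m : ℕ) (g : Fin m → ℕ) (hg : Function.Injective g) :
    P.map (fun ω => fun i : Fin m => X (g i) ω)
      = P.map (fun ω => fun i : Fin m => X (i : ℕ) ω) := by
  classical
  set n := m ⊔ ((Finset.univ.sup g) + 1) with hn
  have hmn : m ≤ n := le_sup_left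
  have hgn : ∀ i, g i < n := fun i =>
    lt_of_lt_of_le (Nat.lt_succ_of_le (Finset.le_sup (Finset.mem_univ i))) le_sup_right
  let g' : Fin m → Fin n := fun i => ⟨g i, hgn i⟩
  have hg' : Function.Injective g' := fun a b hab => hg (by simpa [g', Fin.ext_iff] using hab)
  obtain ⟨σ, hσ⟩ := exists_perm_extend hmn g' hg'
  have key := hexch n σ
  have hr : Measurable (fun v : Fin n → ℕ => fun i : Fin m => v (Fin.castLE hmn i)) :=
    measurable_pi_lambda _ fun i => measurable_pi_apply _
  have h1 : Measurable (fun ω => fun i : Fin n => X (σ i) ω) :=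
    measurable_pi_lambda _ fun i => hXmeas _
  have h2 : Measurable (fun ω => fun i : Fin n => X (i : ℕ) ω) :=
    measurable_pi_lambda _ fun i => hXmeas _
  calc P.map (fun ω => fun i : Fin m => X (g i) ω)
      = (P.map (fun ω => fun i : Fin n => X (σ i) ω)).map
          (fun v => fun i : Fin m => v (Fin.castLE hmn i)) := by
        rw [Measure.map_map hr h1]
        congr 1
        funext ω i
        simp only [Function.comp_apply, hσ i]
        rfl
    _ = (P.map (fun ω => fun i : Fin n => X (i : ℕ) ω)).map
          (fun v => fun i : Fin m => v (Fin.castLE hmn i)) := by rw [key]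
    _ = P.map (fun ω => fun i : Fin m => X (i : ℕ) ω) := by
        rw [Measure.map_map hr h2]
        congr 1

lemma prob_pattern (hXmeas : ∀ k, Measurable (X k)) (hexch : Exchangeable P X)
    (m : ℕ) (g : Fin m → ℕ) (hg : Function.Injective g) (v : Fin m → ℕ) :
    P {ω | ∀ i, X (g i) ω = v i} = P {ω | ∀ i : Fin m, X (i : ℕ) ω = v i} := by
  have hS : MeasurableSet {u : Fin m → ℕ | ∀ i, u i = v i} := by
    have : {u : Fin m → ℕ | ∀ i, u i = v i} = ⋂ i, (fun u : Fin m → ℕ => u i) ⁻¹' {v i} := by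
      ext u; simp [Set.mem_iInter]
    rw [this]
    exact MeasurableSet.iInter fun i => (measurable_pi_apply i) (measurableSet_singleton (v i))
  have hmg : Measurable (fun ω => fun i : Fin m => X (g i) ω) :=
    measurable_pi_lambda _ fun i => hXmeas _
  have hmi : Measurable (fun ω => fun i : Fin m => X (i : ℕ) ω) :=
    measurable_pi_lambda _ fun i => hXmeas _
  have e1 := Measure.map_apply (μ := P) hmg hS
  have e2 := Measure.map_apply (μ := P) hmi hS
  have := map_tuple_eq P X hXmeas hexch m g hg
  rw [this, e2] at e1
  convert e1.symm using 2
  all_goals rfl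

end Aux
noncomputable def patQ {Ω : Type*} [MeasurableSpace Ω] (P : Measure Ω) (X : ℕ → Ω → ℕ)
    (a b : ℕ) : ENNReal :=
  P {ω | ∀ i < a + b, X i ω = if i < a then 1 else 0}

section Aux2

variable {Ω : Type*} [MeasurableSpace Ω] (P : Measure Ω) (X : ℕ → Ω → ℕ)

lemma prob_pattern_patQ (hXmeas : ∀ k, Measurable (X k)) (hexch : Exchangeable P X)
    (a b : ℕ) (g : Fin (a + b) → ℕ) (hg : Function.Injective g) :
    P {ω | ∀ i : Fin (a + b), X (g i) ω = if (i : ℕ) < a then 1 else 0} = patQ P X a b := by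
  rw [prob_pattern P X hXmeas hexch _ g hg]
  unfold patQ
  congr 1
  ext ω
  constructor
  · intro h i hi
    exact h ⟨i, hi⟩
  · intro h i
    exact h i i.isLt

lemma measSet_pattern (hXmeas : ∀ k, Measurable (X k)) (n : ℕ) (c : ℕ → ℕ) :
    MeasurableSet {ω | ∀ i < n, X i ω = c i} := by
  have : {ω | ∀ i < n, X i ω = c i} = ⋂ i, ⋂ (_ : i < n), (X i) ⁻¹' {c i} := by
    ext ω; simp [Set.mem_iInter]
  rw [this]
  exact MeasurableSet.iInter fun i => MeasurableSet.iInter fun hi =>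
    (hXmeas i) (measurableSet_singleton _)

lemma patQ_rec (hX01 : ∀ k ω, X k ω ≤ 1) (hXmeas : ∀ k, Measurable (X k))
    (hexch : Exchangeable P X) (a b : ℕ) :
    patQ P X a b = patQ P X a (b + 1) + patQ P X (a + 1) b := by
  classical
  set A1 : Set Ω := {ω | (∀ i < a + b, X i ω = if i < a then 1 else 0) ∧ X (a + b) ω = 1}
    with hA1
  have hmeasA1 : MeasurableSet A1 := by
    have : A1 = {ω | ∀ i < a + b, X i ω = if i < a then 1 else 0} ∩ (X (a+b)) ⁻¹' {1} := rfl
    rw [this]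
    exact (measSet_pattern X hXmeas _ _).inter ((hXmeas _) (measurableSet_singleton _))
  have hmeasA0 : MeasurableSet {ω | ∀ i < a + (b+1), X i ω = if i < a then 1 else 0} :=
    measSet_pattern X hXmeas _ _
  -- decomposition
  have hunion : {ω | ∀ i < a + b, X i ω = if i < a then 1 else 0}
      = {ω | ∀ i < a + (b+1), X i ω = if i < a then 1 else 0} ∪ A1 := by
    ext ω
    simp only [Set.mem_setOf_eq, Set.mem_union, hA1]
    constructor
    · intro h
      have hle := hX01 (a + b) ω
      rcases Nat.le_one_iff_eq_zero_or_eq_one.mp hle with hv | hv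
      · left
        intro i hi
        rcases Nat.lt_or_ge i (a + b) with h' | h'
        · exact h i h'
        · have : i = a + b := by omega
          subst this
          rw [hv, if_neg (by omega)]
      · right
        exact ⟨h, hv⟩
    · rintro (h | ⟨h, _⟩)
      · intro i hi
        exact h i (by omega)
      · exact h
  have hdisj : Disjoint {ω | ∀ i < a + (b+1), X i ω = if i < a then 1 else 0} A1 := by
    rw [Set.disjoint_left]
    intro ω h0 h1
    have e0 := h0 (a + b) (by omega)
    rw [if_neg (by omega)] at e0
    rw [hA1] at h1
    have := h1.2
    omega
  have hsplit : patQ P X a b = patQ P X a (b+1) + P A1 := by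
    unfold patQ
    rw [hunion]
    exact measure_union hdisj hmeasA1
  -- identify P A1 with patQ (a+1) b
  have hA1eq : P A1 = patQ P X (a + 1) b := by
    set g : Fin (a + 1 + b) → ℕ := fun i =>
      if (i : ℕ) < a then (i : ℕ) else if (i : ℕ) = a then a + b else (i : ℕ) - 1 with hgdef
    have hg : Function.Injective g := by
      intro x y hxy
      rw [hgdef] at hxy
      simp only at hxy
      have hx := x.isLt
      have hy := y.isLt
      rw [Fin.ext_iff]
      split_ifs at hxy <;> omega
    have key := prob_pattern_patQ P X hXmeas hexch (a+1) b g hg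
    rw [← key]
    congr 1
    ext ω
    simp only [Set.mem_setOf_eq, hA1]
    constructor
    · rintro ⟨h, hlast⟩ i
      rw [hgdef]
      simp only
      have hi := i.isLt
      rcases Nat.lt_or_ge (i : ℕ) a with hc | hc
      · rw [if_pos hc, if_pos (by omega)]
        have := h (i : ℕ) (by omega)
        rwa [if_pos hc] at this
      · rcases Nat.eq_or_lt_of_le hc with hc2 | hc2
        · rw [if_neg (by omega), if_pos hc2.symm, if_pos (by omega)]
          exact hlast
        · rw [if_neg (by omega), if_neg (by omega), if_neg (by omega)]
          have := h ((i : ℕ) - 1) (by omega)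
          rwa [if_neg (by omega)] at this
    · intro h
      constructor
      · intro j hj
        rcases Nat.lt_or_ge j a with hc | hc
        · have := h ⟨j, by omega⟩
          rw [hgdef] at this
          simp only [if_pos hc] at this
          rw [if_pos hc]
          rwa [if_pos (by omega)] at this
        · have := h ⟨j + 1, by omega⟩
          rw [hgdef] at this
          simp only at this
          rw [if_neg (by omega), if_neg (by omega)] at this
          simp only [Nat.add_sub_cancel] at this
          rw [if_neg (by omega)]
          rwa [if_neg (by omega)] at this
      · have := h ⟨a, by omega⟩
        rw [hgdef] at this
        simp only [if_neg (lt_irrefl a), if_pos rfl] at this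
        simpa using this
  rw [hsplit, hA1eq]

lemma prob_ones_image (hXmeas : ∀ k, Measurable (X k)) (hexch : Exchangeable P X)
    (k : ℕ) (f : Fin k → ℕ) :
    P {ω | ∀ j, X (f j) ω = 1}
      = patQ P X (Finset.image f Finset.univ).card 0 := by
  classical
  set s := Finset.image f Finset.univ with hs
  set r := s.card with hr
  set e : Fin r → ℕ := fun i => s.orderEmbOfFin rfl i with he
  have hg : Function.Injective e := (s.orderEmbOfFin rfl).injective
  have key := prob_pattern_patQ P X hXmeas hexch r 0 e hg
  rw [← key]
  congr 1
  ext ω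
  simp only [Set.mem_setOf_eq]
  constructor
  · intro h i
    rw [if_pos (by omega)]
    have : e i ∈ s := s.orderEmbOfFin_mem rfl i
    rw [hs, Finset.mem_image] at this
    obtain ⟨j, _, hj⟩ := this
    rw [← hj]
    exact h j
  · intro h j
    have hmem : f j ∈ s := by
      rw [hs, Finset.mem_image]
      exact ⟨j, Finset.mem_univ j, rfl⟩
    have : f j ∈ Set.range e := by
      rw [he]
      have := s.range_orderEmbOfFin rfl
      rw [show (fun i : Fin r => s.orderEmbOfFin rfl i) = ⇑(s.orderEmbOfFin rfl) from rfl, this]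
      exact_mod_cast hmem
    obtain ⟨i, hi⟩ := this
    have := h i
    rw [if_pos (by omega)] at this
    rwa [hi] at this

end Aux2
section Aux3

variable {Ω : Type*} [MeasurableSpace Ω] (P : Measure Ω) (X : ℕ → Ω → ℕ)

lemma prob_Es (hXmeas : ∀ k, Measurable (X k)) (hexch : Exchangeable P X)
    (h b : ℕ) (s : Finset ℕ) (hsub : s ⊆ Finset.range (h + b)) (hcard : s.card = h) :
    P {ω | ∀ i < h + b, X i ω = if i ∈ s then 1 else 0} = patQ P X h b := by
  classical
  set t := Finset.range (h + b) \ s with ht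
  have hcardt : t.card = b := by
    rw [ht, Finset.card_sdiff_of_subset hsub, Finset.card_range, hcard]
    omega
  set e1 := s.orderEmbOfFin hcard with he1
  set e2 := t.orderEmbOfFin hcardt with he2
  set g : Fin (h + b) → ℕ := fun i =>
    if hi : (i : ℕ) < h then e1 ⟨i, hi⟩ else e2 ⟨(i : ℕ) - h, by omega⟩ with hgdef
  have hglt : ∀ (i : Fin (h + b)) (hi : (i : ℕ) < h), g i = e1 ⟨(i : ℕ), hi⟩ := by
    intro i hi; rw [hgdef]; simp only [dif_pos hi]
  have hgge : ∀ (i : Fin (h + b)) (hi : ¬ (i : ℕ) < h),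
      g i = e2 ⟨(i : ℕ) - h, by omega⟩ := by
    intro i hi; rw [hgdef]; simp only [dif_neg hi]
  have hmem1 : ∀ (i : Fin h), e1 i ∈ s := fun i => s.orderEmbOfFin_mem hcard i
  have hmem2 : ∀ (i : Fin b), e2 i ∈ t := fun i => t.orderEmbOfFin_mem hcardt i
  have hg : Function.Injective g := by
    intro x y hxy
    by_cases hx : (x : ℕ) < h <;> by_cases hy : (y : ℕ) < h
    · rw [hglt x hx, hglt y hy] at hxy
      have := e1.injective hxy
      rw [Fin.ext_iff] at this ⊢
      simpa using this
    · rw [hglt x hx, hgge y hy] at hxy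
      exfalso
      have h1 := hmem1 ⟨(x : ℕ), hx⟩
      have h2 := hmem2 ⟨(y : ℕ) - h, by omega⟩
      rw [hxy] at h1
      rw [ht, Finset.mem_sdiff] at h2
      exact h2.2 h1
    · rw [hgge x hx, hglt y hy] at hxy
      exfalso
      have h1 := hmem1 ⟨(y : ℕ), hy⟩
      have h2 := hmem2 ⟨(x : ℕ) - h, by omega⟩
      rw [← hxy] at h1
      rw [ht, Finset.mem_sdiff] at h2
      exact h2.2 h1
    · rw [hgge x hx, hgge y hy] at hxy
      have := e2.injective hxy
      rw [Fin.ext_iff] at this ⊢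
      simp only at this
      omega
  have key := prob_pattern_patQ P X hXmeas hexch h b g hg
  rw [← key]
  congr 1
  ext ω
  simp only [Set.mem_setOf_eq]
  constructor
  · intro hω i
    by_cases hi : (i : ℕ) < h
    · rw [hglt i hi, if_pos hi]
      have hm : e1 ⟨(i : ℕ), hi⟩ ∈ s := hmem1 _
      have hlt : e1 ⟨(i : ℕ), hi⟩ < h + b := by
        have := hsub hm; rwa [Finset.mem_range] at this
      have := hω _ hlt
      rwa [if_pos hm] at this
    · rw [hgge i hi, if_neg hi]
      have hm : e2 ⟨(i : ℕ) - h, by omega⟩ ∈ t := hmem2 _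
      rw [ht, Finset.mem_sdiff, Finset.mem_range] at hm
      have := hω _ hm.1
      rwa [if_neg hm.2] at this
  · intro hω j hj
    by_cases hjs : j ∈ s
    · rw [if_pos hjs]
      have : j ∈ Set.range e1 := by
        rw [he1, Finset.range_orderEmbOfFin]
        exact_mod_cast hjs
      obtain ⟨i0, hi0⟩ := this
      have := hω ⟨(i0 : ℕ), by omega⟩
      rw [hglt _ (by simpa using i0.isLt), if_pos (by simpa using i0.isLt)] at this
      simpa [Fin.eta, hi0] using this
    · rw [if_neg hjs]
      have hjt : j ∈ t := by
        rw [ht, Finset.mem_sdiff, Finset.mem_range]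
        exact ⟨hj, hjs⟩
      have : j ∈ Set.range e2 := by
        rw [he2, Finset.range_orderEmbOfFin]
        exact_mod_cast hjt
      obtain ⟨i0, hi0⟩ := this
      have := hω ⟨h + (i0 : ℕ), by omega⟩
      rw [hgge _ (by simp), if_neg (by simp)] at this
      simp only [Nat.add_sub_cancel_left] at this
      simpa [Fin.eta, hi0] using this

lemma prob_count (hX01 : ∀ k ω, X k ω ≤ 1) (hXmeas : ∀ k, Measurable (X k))
    (hexch : Exchangeable P X) (n h : ℕ) (hn : h ≤ n) :
    P {ω | ∑ i ∈ Finset.range n, X i ω = h} = (n.choose h) * patQ P X h (n - h) := by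
  classical
  obtain ⟨b, rfl⟩ : ∃ b, n = h + b := ⟨n - h, by omega⟩
  have hb : h + b - h = b := by omega
  rw [hb]
  have hunion : {ω | ∑ i ∈ Finset.range (h + b), X i ω = h}
      = ⋃ s ∈ Finset.powersetCard h (Finset.range (h + b)),
          {ω | ∀ i < h + b, X i ω = if i ∈ s then 1 else 0} := by
    ext ω
    simp only [Set.mem_setOf_eq, Set.mem_iUnion, Finset.mem_powersetCard]
    constructor
    · intro hsum
      refine ⟨(Finset.range (h + b)).filter (fun i => X i ω = 1),
        ⟨Finset.filter_subset _ _, ?_⟩, ?_⟩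
      · rw [Finset.card_filter]
        conv_rhs => rw [← hsum]
        apply Finset.sum_congr rfl
        intro i _
        have := hX01 i ω
        rcases Nat.le_one_iff_eq_zero_or_eq_one.mp this with hv | hv <;> simp [hv]
      · intro i hi
        by_cases hv : X i ω = 1
        · rw [hv, if_pos]
          rw [Finset.mem_filter, Finset.mem_range]
          exact ⟨hi, hv⟩
        · have h0 : X i ω = 0 := by have := hX01 i ω; omega
          rw [h0, if_neg]
          rw [Finset.mem_filter]
          rintro ⟨-, hc⟩
          exact hv hc
    · rintro ⟨s, ⟨hsub, hcard⟩, hω⟩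
      have : ∑ i ∈ Finset.range (h + b), X i ω
          = ∑ i ∈ Finset.range (h + b), (if i ∈ s then 1 else 0) := by
        apply Finset.sum_congr rfl
        intro i hi
        rw [Finset.mem_range] at hi
        exact hω i hi
      rw [this, Finset.sum_ite_mem, Finset.inter_eq_right.mpr hsub,
        Finset.sum_const, smul_eq_mul, mul_one, hcard]
  rw [hunion]
  rw [measure_biUnion_finset ?disj ?meas]
  · rw [Finset.sum_congr rfl (fun s hs => ?_), Finset.sum_const,
      Finset.card_powersetCard, Finset.card_range, nsmul_eq_mul]
    rw [Finset.mem_powersetCard] at hs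
    exact prob_Es P X hXmeas hexch h b s hs.1 hs.2
  case disj =>
    intro s hs u hu hsu
    rw [Finset.mem_coe, Finset.mem_powersetCard] at hs hu
    have : ¬ s ⊆ u := by
      intro hcon
      exact hsu (Finset.eq_of_subset_of_card_le hcon (by omega))
    obtain ⟨j, hjs, hju⟩ := Finset.not_subset.mp this
    have hjn : j < h + b := by
      have := hs.1 hjs; rwa [Finset.mem_range] at this
    rw [Function.onFun, Set.disjoint_left]
    intro ω h1 h2
    have e1 := h1 j hjn
    have e2 := h2 j hjn
    rw [if_pos hjs] at e1
    rw [if_neg hju] at e2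
    omega
  case meas =>
    intro s _
    exact measSet_pattern X hXmeas _ _

end Aux3
section Aux4

variable {Ω : Type*} [MeasurableSpace Ω] (P : Measure Ω) [IsProbabilityMeasure P]
  (X : ℕ → Ω → ℕ)

lemma toReal_prob_le_one (A : Set Ω) : (P A).toReal ≤ 1 := by
  calc (P A).toReal ≤ (1 : ENNReal).toReal :=
        ENNReal.toReal_mono ENNReal.one_ne_top prob_le_one
    _ = 1 := by simp

lemma measSet_ones (hXmeas : ∀ k, Measurable (X k)) {k : ℕ} (f : Fin k → ℕ) :
    MeasurableSet {ω | ∀ j, X (f j) ω = 1} := by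
  have : {ω | ∀ j, X (f j) ω = 1} = ⋂ j, (X (f j)) ⁻¹' {1} := by
    ext ω; simp [Set.mem_iInter]
  rw [this]
  exact MeasurableSet.iInter fun j => (hXmeas _) (measurableSet_singleton _)

lemma prod_eq_indicator (hX01 : ∀ k ω, X k ω ≤ 1) {k : ℕ} (f : Fin k → ℕ) :
    (fun ω => ∏ j, (X (f j) ω : ℝ))
      = Set.indicator {ω | ∀ j, X (f j) ω = 1} (fun _ => (1 : ℝ)) := by
  funext ω
  by_cases hω : ∀ j, X (f j) ω = 1
  · have hm : ω ∈ {ω | ∀ j, X (f j) ω = 1} := hω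
    rw [Set.indicator_of_mem hm]
    exact Finset.prod_eq_one fun j _ => by rw [hω j]; norm_num
  · have hm : ω ∉ {ω | ∀ j, X (f j) ω = 1} := hω
    rw [Set.indicator_of_notMem hm]
    push_neg at hω
    obtain ⟨j, hj⟩ := hω
    refine Finset.prod_eq_zero (Finset.mem_univ j) ?_
    have := hX01 (f j) ω
    have : X (f j) ω = 0 := by omega
    rw [this]; norm_num

lemma integrable_prod_ones (hX01 : ∀ k ω, X k ω ≤ 1) (hXmeas : ∀ k, Measurable (X k))
    {k : ℕ} (f : Fin k → ℕ) :
    Integrable (fun ω => ∏ j, (X (f j) ω : ℝ)) P := by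
  rw [prod_eq_indicator X hX01 f]
  exact (integrable_const (1 : ℝ)).indicator (measSet_ones X hXmeas f)

lemma integral_prod_ones (hX01 : ∀ k ω, X k ω ≤ 1) (hXmeas : ∀ k, Measurable (X k))
    {k : ℕ} (f : Fin k → ℕ) :
    ∫ ω, ∏ j, (X (f j) ω : ℝ) ∂P = (P {ω | ∀ j, X (f j) ω = 1}).toReal := by
  rw [prod_eq_indicator X hX01 f, integral_indicator_const _ (measSet_ones X hXmeas f)]
  simp
  rfl

lemma integral_pow_sum (hX01 : ∀ k ω, X k ω ≤ 1) (hXmeas : ∀ k, Measurable (X k))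
    (k N : ℕ) :
    ∫ ω, (∑ i ∈ Finset.range N, (X i ω : ℝ)) ^ k ∂P
      = ∑ f ∈ Fintype.piFinset (fun _ : Fin k => Finset.range N),
          (P {ω | ∀ j, X (f j) ω = 1}).toReal := by
  have hpt : ∀ ω, (∑ i ∈ Finset.range N, (X i ω : ℝ)) ^ k
      = ∑ f ∈ Fintype.piFinset (fun _ : Fin k => Finset.range N), ∏ j, (X (f j) ω : ℝ) := by
    intro ω
    calc (∑ i ∈ Finset.range N, (X i ω : ℝ)) ^ k
        = ∏ _j : Fin k, (∑ i ∈ Finset.range N, (X i ω : ℝ)) := by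
          rw [Finset.prod_const, Finset.card_univ, Fintype.card_fin]
      _ = _ := Finset.prod_univ_sum _ _
  calc ∫ ω, (∑ i ∈ Finset.range N, (X i ω : ℝ)) ^ k ∂P
      = ∫ ω, ∑ f ∈ Fintype.piFinset (fun _ : Fin k => Finset.range N),
          ∏ j, (X (f j) ω : ℝ) ∂P := by
        congr 1; funext ω; exact hpt ω
    _ = ∑ f ∈ Fintype.piFinset (fun _ : Fin k => Finset.range N),
          ∫ ω, ∏ j, (X (f j) ω : ℝ) ∂P :=
        integral_finset_sum _ fun f _ => integrable_prod_ones P X hX01 hXmeas f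
    _ = _ := Finset.sum_congr rfl fun f _ => integral_prod_ones P X hX01 hXmeas f

end Aux4
section Aux5

variable {Ω : Type*} [MeasurableSpace Ω] (P : Measure Ω) [IsProbabilityMeasure P]
  (X : ℕ → Ω → ℕ)

lemma card_filter_injective (k N : ℕ) :
    ((Fintype.piFinset (fun _ : Fin k => Finset.range N)).filter
        (fun f => Function.Injective f)).card = N.descFactorial k := by
  classical
  have hdesc : N.descFactorial k = (Finset.univ : Finset (Fin k ↪ Fin N)).card := by
    rw [Finset.card_univ, Fintype.card_embedding_eq, Fintype.card_fin, Fintype.card_fin]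
  rw [hdesc]
  have hlt : ∀ f ∈ (Fintype.piFinset (fun _ : Fin k => Finset.range N)).filter
      (fun f => Function.Injective f), ∀ j, f j < N := by
    intro f hf j
    rw [Finset.mem_filter, Fintype.mem_piFinset] at hf
    have := hf.1 j
    rwa [Finset.mem_range] at this
  refine Finset.card_bij'
    (fun f hf => ⟨fun j => ⟨f j, hlt f hf j⟩, fun a b hab => ?_⟩)
    (fun e _ => fun t => (e t : ℕ)) (fun f hf => Finset.mem_univ _) (fun e he => ?_)
    (fun f hf => ?_) (fun e he => ?_)
  · have hinj : Function.Injective f := (Finset.mem_filter.mp hf).2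
    exact hinj (by simpa [Fin.ext_iff] using congrArg Fin.val hab)
  · rw [Finset.mem_filter, Fintype.mem_piFinset]
    constructor
    · intro j; rw [Finset.mem_range]; exact (e j).isLt
    · intro a b hab
      exact e.injective (Fin.ext hab)
  · rfl
  · ext t
    rfl

lemma descFactorial_ratio_tendsto (k : ℕ) :
    Filter.Tendsto (fun N : ℕ => (N.descFactorial k : ℝ) / (N : ℝ) ^ k) atTop (𝓝 1) := by
  have heq : ∀ᶠ N : ℕ in atTop, (N.descFactorial k : ℝ) / (N : ℝ) ^ k
      = ∏ j ∈ Finset.range k, (1 - (j : ℝ) / (N : ℝ)) := by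
    filter_upwards [eventually_ge_atTop k] with N hN
    have hN0 : N ≠ 0 ∨ k = 0 := by
      rcases Nat.eq_zero_or_pos k with hk | hk
      · exact Or.inr hk
      · exact Or.inl (by omega)
    rcases hN0 with hN0 | hk0
    · have hNR : ((N : ℝ)) ≠ 0 := Nat.cast_ne_zero.mpr hN0
      rw [Nat.descFactorial_eq_prod_range]
      rw [Nat.cast_prod]
      have : ((N : ℝ)) ^ k = ∏ _j ∈ Finset.range k, (N : ℝ) := by
        rw [Finset.prod_const, Finset.card_range]
      rw [this, ← Finset.prod_div_distrib]
      apply Finset.prod_congr rfl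
      intro j hj
      rw [Finset.mem_range] at hj
      rw [Nat.cast_sub (by omega), sub_div, div_self hNR]
    · subst hk0
      simp
  have heq' : (fun N : ℕ => (N.descFactorial k : ℝ) / (N : ℝ) ^ k)
      =ᶠ[atTop] (fun N : ℕ => ∏ j ∈ Finset.range k, (1 - (j : ℝ) / (N : ℝ))) := heq
  refine Filter.Tendsto.congr' heq'.symm ?_
  have : Filter.Tendsto (fun N : ℕ => ∏ j ∈ Finset.range k, (1 - (j : ℝ) / (N : ℝ)))
      atTop (𝓝 (∏ _j ∈ Finset.range k, (1 : ℝ))) := by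
    apply tendsto_finset_prod
    intro j _
    have h0 : Filter.Tendsto (fun N : ℕ => (j : ℝ) / (N : ℝ)) atTop (𝓝 0) :=
      tendsto_const_div_atTop_nhds_zero_nat _
    have h1 : Filter.Tendsto (fun _ : ℕ => (1 : ℝ)) atTop (𝓝 1) := tendsto_const_nhds
    have := h1.sub h0
    simpa using this
  simpa using this

lemma tendsto_moment (hX01 : ∀ k ω, X k ω ≤ 1) (hXmeas : ∀ k, Measurable (X k))
    (hexch : Exchangeable P X) (k : ℕ) :
    Filter.Tendsto
      (fun N : ℕ => ∫ ω, ((∑ i ∈ Finset.range N, (X i ω : ℝ)) / (N : ℝ)) ^ k ∂P)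
      atTop (𝓝 ((patQ P X k 0).toReal)) := by
  classical
  set c := (patQ P X k 0).toReal with hc
  set F := fun N : ℕ => ∫ ω, ((∑ i ∈ Finset.range N, (X i ω : ℝ)) / (N : ℝ)) ^ k ∂P with hF
  have hc01 : 0 ≤ c ∧ c ≤ 1 := ⟨ENNReal.toReal_nonneg, toReal_prob_le_one P _⟩
  have hbound : ∀ᶠ N : ℕ in atTop,
      |F N - c| ≤ 1 - (N.descFactorial k : ℝ) / (N : ℝ) ^ k := by
    filter_upwards [eventually_ge_atTop 1] with N hN
    have hNR : (0 : ℝ) < (N : ℝ) := by exact_mod_cast hN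
    have hNk : (0 : ℝ) < (N : ℝ) ^ k := by positivity
    set T := Fintype.piFinset (fun _ : Fin k => Finset.range N) with hT
    set pr := fun f : Fin k → ℕ => (P {ω | ∀ j, X (f j) ω = 1}).toReal with hpr
    set B := ∑ f ∈ T.filter (fun f => ¬ Function.Injective f), pr f with hBdef
    set D := (N.descFactorial k : ℝ) with hD
    have hFN : F N = (∑ f ∈ T, pr f) / (N : ℝ) ^ k := by
      rw [hF]
      simp only
      have hpt : ∀ ω, ((∑ i ∈ Finset.range N, (X i ω : ℝ)) / (N : ℝ)) ^ k
          = (∑ i ∈ Finset.range N, (X i ω : ℝ)) ^ k / (N : ℝ) ^ k := by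
        intro ω; rw [div_pow]
      rw [integral_congr_ae (Filter.Eventually.of_forall hpt), integral_div,
        integral_pow_sum P X hX01 hXmeas k N]
    have hpr01 : ∀ f, 0 ≤ pr f ∧ pr f ≤ 1 := fun f =>
      ⟨ENNReal.toReal_nonneg, toReal_prob_le_one P _⟩
    have hprinj : ∀ f ∈ T.filter (fun f => Function.Injective f), pr f = c := by
      intro f hf
      rw [Finset.mem_filter] at hf
      rw [hpr, hc]
      simp only
      rw [prob_ones_image P X hXmeas hexch k f]
      congr 2
      rw [Finset.card_image_of_injective _ hf.2, Finset.card_univ, Fintype.card_fin]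
    have hcardT : (T.card : ℝ) = (N : ℝ) ^ k := by
      rw [hT, Fintype.card_piFinset]
      simp [Finset.card_range]
    have hsplit : ∑ f ∈ T, pr f = D * c + B := by
      rw [← Finset.sum_filter_add_sum_filter_not T (fun f => Function.Injective f) pr]
      congr 1
      rw [Finset.sum_congr rfl hprinj, Finset.sum_const, card_filter_injective,
        nsmul_eq_mul]
    have hdesc_le : N.descFactorial k ≤ T.card := by
      have := Finset.card_filter_le T (fun f => Function.Injective f)
      rw [card_filter_injective] at this
      exact this
    have hcards : ((T.filter (fun f => ¬ Function.Injective f)).card : ℝ)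
        = (N : ℝ) ^ k - D := by
      have h2 := Finset.card_filter_add_card_filter_not
        (s := T) (p := fun f => Function.Injective f)
      rw [card_filter_injective] at h2
      have : (T.filter (fun f => ¬ Function.Injective f)).card = T.card - N.descFactorial k := by
        omega
      rw [this, Nat.cast_sub hdesc_le, hcardT, hD]
    have hdk : D ≤ (N : ℝ) ^ k := by
      rw [hD, ← hcardT]; exact_mod_cast hdesc_le
    have hND : (0 : ℝ) ≤ (N : ℝ) ^ k - D := by linarith
    have hB1 : 0 ≤ B := Finset.sum_nonneg fun f _ => (hpr01 f).1
    have hB2 : B ≤ (N : ℝ) ^ k - D := by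
      calc B ≤ ∑ _f ∈ T.filter (fun f => ¬ Function.Injective f), (1 : ℝ) :=
            Finset.sum_le_sum fun f _ => (hpr01 f).2
        _ = ((T.filter (fun f => ¬ Function.Injective f)).card : ℝ) := by
            rw [Finset.sum_const, nsmul_eq_mul, mul_one]
        _ = (N : ℝ) ^ k - D := hcards
    rw [hFN, hsplit]
    have heq2 : (D * c + B) / (N : ℝ) ^ k - c
        = (B - ((N : ℝ) ^ k - D) * c) / (N : ℝ) ^ k := by
      field_simp
      ring
    have h1 : |B - ((N : ℝ) ^ k - D) * c| ≤ (N : ℝ) ^ k - D := by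
      rw [abs_le]
      constructor <;> nlinarith [hc01.1, hc01.2]
    calc |(D * c + B) / (N : ℝ) ^ k - c|
        = |B - ((N : ℝ) ^ k - D) * c| / (N : ℝ) ^ k := by
          rw [heq2, abs_div, abs_of_pos hNk]
      _ ≤ ((N : ℝ) ^ k - D) / (N : ℝ) ^ k := by
          exact (div_le_div_iff_of_pos_right hNk).mpr h1
      _ = 1 - D / (N : ℝ) ^ k := by field_simp
  have h0 : Filter.Tendsto (fun N : ℕ => 1 - (N.descFactorial k : ℝ) / (N : ℝ) ^ k)
      atTop (𝓝 0) := by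
    have h1 : Filter.Tendsto (fun _ : ℕ => (1 : ℝ)) atTop (𝓝 1) := tendsto_const_nhds
    have := h1.sub (descFactorial_ratio_tendsto k)
    simpa using this
  have hFc : Filter.Tendsto (fun N => F N - c) atTop (𝓝 0) := by
    apply squeeze_zero_norm' ?_ h0
    filter_upwards [hbound] with N hN
    simpa using hN
  have := hFc.add_const c
  simpa using this

end Aux5
noncomputable def YR {Ω : Type*} (X : ℕ → Ω → ℕ) (N : ℕ) (ω : Ω) : ℝ :=
  (∑ i ∈ Finset.range N, (X i ω : ℝ)) / (N : ℝ)

section Aux6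

variable {Ω : Type*} [MeasurableSpace Ω] (P : Measure Ω) [IsProbabilityMeasure P]
  (X : ℕ → Ω → ℕ)

lemma integrable_bdd {g : Ω → ℝ} (hm : Measurable g) (C : ℝ) (hb : ∀ ω, |g ω| ≤ C) :
    Integrable g P := by
  refine (integrable_const C).mono' hm.aestronglyMeasurable ?_
  exact ae_of_all _ fun ω => by rw [Real.norm_eq_abs]; exact hb ω

lemma measurable_castX (hXmeas : ∀ k, Measurable (X k)) (i : ℕ) :
    Measurable (fun ω => (X i ω : ℝ)) :=
  measurable_from_nat.comp (hXmeas i)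

lemma measurable_YR (hXmeas : ∀ k, Measurable (X k)) (N : ℕ) :
    Measurable (YR X N) := by
  apply Measurable.div_const
  exact Finset.measurable_sum _ fun i _ => measurable_castX X hXmeas i

lemma YR_mem01 (hX01 : ∀ k ω, X k ω ≤ 1) (N : ℕ) (ω : Ω) :
    0 ≤ YR X N ω ∧ YR X N ω ≤ 1 := by
  unfold YR
  rcases Nat.eq_zero_or_pos N with h | h
  · subst h; simp
  constructor
  · apply div_nonneg _ (Nat.cast_nonneg N)
    exact Finset.sum_nonneg fun i _ => Nat.cast_nonneg _
  · rw [div_le_one (by exact_mod_cast h)]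
    calc ∑ i ∈ Finset.range N, (X i ω : ℝ) ≤ ∑ _i ∈ Finset.range N, (1 : ℝ) :=
          Finset.sum_le_sum fun i _ => by exact_mod_cast hX01 i ω
      _ = N := by simp

lemma integral_XX (hX01 : ∀ k ω, X k ω ≤ 1) (hXmeas : ∀ k, Measurable (X k))
    (hexch : Exchangeable P X) (i j : ℕ) :
    ∫ ω, (X i ω : ℝ) * (X j ω : ℝ) ∂P
      = (patQ P X (if i = j then 1 else 2) 0).toReal := by
  classical
  have h1 : (fun ω => (X i ω : ℝ) * (X j ω : ℝ))
      = fun ω => ∏ t, (X ((![i, j]) t) ω : ℝ) := by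
    funext ω; rw [Fin.prod_univ_two]; simp
  rw [h1, integral_prod_ones P X hX01 hXmeas, prob_ones_image P X hXmeas hexch]
  congr 2
  have himg : Finset.image ![i, j] Finset.univ = {i, j} := by
    ext x
    simp only [Finset.mem_image, Fin.exists_fin_two, Finset.mem_univ, true_and,
      Finset.mem_insert, Finset.mem_singleton, Matrix.cons_val_zero, Matrix.cons_val_one,
      Matrix.head_cons]
    constructor
    · rintro (h | h) <;> [exact Or.inl h.symm; exact Or.inr h.symm]
    · rintro (h | h) <;> [exact Or.inl h.symm; exact Or.inr h.symm]
  rw [himg]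
  by_cases hij : i = j
  · subst hij
    simp
  · rw [if_neg hij, Finset.card_pair hij]

lemma integral_YY (hX01 : ∀ k ω, X k ω ≤ 1) (hXmeas : ∀ k, Measurable (X k))
    (hexch : Exchangeable P X) {m n : ℕ} (hm : 1 ≤ m) (hmn : m ≤ n) :
    ∫ ω, YR X m ω * YR X n ω ∂P
      = (patQ P X 2 0).toReal
        + ((patQ P X 1 0).toReal - (patQ P X 2 0).toReal) / (n : ℝ) := by
  classical
  have hn : 1 ≤ n := le_trans hm hmn
  have hmR : (0 : ℝ) < m := by exact_mod_cast hm
  have hnR : (0 : ℝ) < n := by exact_mod_cast hn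
  set q1 := (patQ P X 1 0).toReal with hq1
  set q2 := (patQ P X 2 0).toReal with hq2
  have hpt : ∀ ω, YR X m ω * YR X n ω
      = (∑ i ∈ Finset.range m, ∑ j ∈ Finset.range n,
          (X i ω : ℝ) * (X j ω : ℝ)) / ((m : ℝ) * (n : ℝ)) := by
    intro ω
    unfold YR
    rw [div_mul_div_comm, Finset.sum_mul_sum]
  have hint : ∀ i j : ℕ, Integrable (fun ω => (X i ω : ℝ) * (X j ω : ℝ)) P := by
    intro i j
    apply integrable_bdd P ((measurable_castX X hXmeas i).mul (measurable_castX X hXmeas j)) 1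
    intro ω
    have h1 := hX01 i ω; have h2 := hX01 j ω
    simp only [Pi.mul_apply]
    rw [abs_mul]
    have b1 : |(X i ω : ℝ)| ≤ 1 := by rw [abs_of_nonneg (Nat.cast_nonneg _)]; exact_mod_cast h1
    have b2 : |(X j ω : ℝ)| ≤ 1 := by rw [abs_of_nonneg (Nat.cast_nonneg _)]; exact_mod_cast h2
    nlinarith [abs_nonneg ((X i ω : ℝ)), abs_nonneg ((X j ω : ℝ))]
  calc ∫ ω, YR X m ω * YR X n ω ∂P
      = ∫ ω, (∑ i ∈ Finset.range m, ∑ j ∈ Finset.range n,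
          (X i ω : ℝ) * (X j ω : ℝ)) / ((m : ℝ) * (n : ℝ)) ∂P := by
        exact integral_congr_ae (Filter.Eventually.of_forall hpt)
    _ = (∫ ω, ∑ i ∈ Finset.range m, ∑ j ∈ Finset.range n,
          (X i ω : ℝ) * (X j ω : ℝ) ∂P) / ((m : ℝ) * (n : ℝ)) := integral_div _ _
    _ = (∑ i ∈ Finset.range m, ∑ j ∈ Finset.range n,
          ∫ ω, (X i ω : ℝ) * (X j ω : ℝ) ∂P) / ((m : ℝ) * (n : ℝ)) := by
        congr 1
        rw [integral_finset_sum _ fun i _ => integrable_finset_sum _ fun j _ => hint i j]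
        exact Finset.sum_congr rfl fun i _ => integral_finset_sum _ fun j _ => hint i j
    _ = (∑ i ∈ Finset.range m, ∑ j ∈ Finset.range n,
          (if i = j then q1 else q2)) / ((m : ℝ) * (n : ℝ)) := by
        congr 1
        refine Finset.sum_congr rfl fun i _ => Finset.sum_congr rfl fun j _ => ?_
        rw [integral_XX P X hX01 hXmeas hexch i j]
        by_cases hij : i = j <;> simp [hij, hq1, hq2]
    _ = (∑ i ∈ Finset.range m, ((n : ℝ) * q2 + (q1 - q2))) / ((m : ℝ) * (n : ℝ)) := by
        congr 1
        refine Finset.sum_congr rfl fun i hi => ?_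
        rw [Finset.mem_range] at hi
        have hin : i ∈ Finset.range n := Finset.mem_range.mpr (by omega)
        have : ∀ j, (if i = j then q1 else q2) = q2 + (if i = j then q1 - q2 else 0) := by
          intro j; by_cases hij : i = j <;> simp [hij]
        rw [Finset.sum_congr rfl fun j _ => this j, Finset.sum_add_distrib,
          Finset.sum_const, Finset.card_range, Finset.sum_ite_eq _ i, if_pos hin,
          nsmul_eq_mul]
    _ = q2 + (q1 - q2) / (n : ℝ) := by
        rw [Finset.sum_const, Finset.card_range, nsmul_eq_mul]
        field_simp

end Aux6
section Aux7

variable {Ω : Type*} [MeasurableSpace Ω] (P : Measure Ω) [IsProbabilityMeasure P]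
  (X : ℕ → Ω → ℕ)

lemma patQ2_le_patQ1 : patQ P X 2 0 ≤ patQ P X 1 0 := by
  apply measure_mono
  intro ω h i hi
  have h1 : i = 0 := by omega
  subst h1
  have := h 0 (by omega)
  simpa using this

lemma integral_sq_diff (hX01 : ∀ k ω, X k ω ≤ 1) (hXmeas : ∀ k, Measurable (X k))
    (hexch : Exchangeable P X) {m n : ℕ} (hm : 1 ≤ m) (hmn : m ≤ n) :
    ∫ ω, (YR X n ω - YR X m ω) ^ 2 ∂P ≤ 1 / (m : ℝ) := by
  have hn : 1 ≤ n := le_trans hm hmn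
  have hmR : (0 : ℝ) < m := by exact_mod_cast hm
  have hnR : (0 : ℝ) < n := by exact_mod_cast hn
  set q1 := (patQ P X 1 0).toReal with hq1
  set q2 := (patQ P X 2 0).toReal with hq2
  have hq21 : q2 ≤ q1 := ENNReal.toReal_mono (measure_ne_top _ _) (patQ2_le_patQ1 P X)
  have hq10 : q1 ≤ 1 := toReal_prob_le_one P _
  have hq2nn : 0 ≤ q2 := ENNReal.toReal_nonneg
  have hintYY : ∀ a b : ℕ, Integrable (fun ω => YR X a ω * YR X b ω) P := by
    intro a b
    apply integrable_bdd P ((measurable_YR X hXmeas a).mul (measurable_YR X hXmeas b)) 1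
    intro ω
    have h1 := YR_mem01 X hX01 a ω
    have h2 := YR_mem01 X hX01 b ω
    simp only [Pi.mul_apply]
    rw [abs_mul, abs_of_nonneg h1.1, abs_of_nonneg h2.1]
    nlinarith [h1.1, h1.2, h2.1, h2.2]
  have key_nn := integral_YY P X hX01 hXmeas hexch hn (le_refl n)
  have key_mn := integral_YY P X hX01 hXmeas hexch hm hmn
  have key_mm := integral_YY P X hX01 hXmeas hexch hm (le_refl m)
  have hpt : ∀ ω, (YR X n ω - YR X m ω) ^ 2
      = YR X n ω * YR X n ω - 2 * (YR X m ω * YR X n ω) + YR X m ω * YR X m ω := by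
    intro ω; ring
  rw [integral_congr_ae (Filter.Eventually.of_forall hpt)]
  have hI2 : Integrable (fun ω => 2 * (YR X m ω * YR X n ω)) P := (hintYY m n).const_mul 2
  have hI1 : Integrable (fun ω => YR X n ω * YR X n ω - 2 * (YR X m ω * YR X n ω)) P :=
    (hintYY n n).sub hI2
  rw [integral_add hI1 (hintYY m m), integral_sub (hintYY n n) hI2, integral_const_mul,
    key_nn, key_mn, key_mm]
  have h1n : 0 ≤ (q1 - q2) / (n : ℝ) := div_nonneg (by linarith) hnR.le
  have h1m : (q1 - q2) / (m : ℝ) ≤ 1 / (m : ℝ) := by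
    apply (div_le_div_iff_of_pos_right hmR).mpr
    linarith
  linarith

lemma exists_limit_moments (hX01 : ∀ k ω, X k ω ≤ 1) (hXmeas : ∀ k, Measurable (X k))
    (hexch : Exchangeable P X) :
    ∃ L : Ω → ℝ, Measurable L ∧ (∀ ω, L ω ∈ Set.Icc (0 : ℝ) 1) ∧
      ∀ k : ℕ, ∫ ω, (L ω) ^ k ∂P = (patQ P X k 0).toReal := by
  classical
  set nj : ℕ → ℕ := fun j => (j + 1) ^ 4 with hnj
  set Δ : ℕ → Ω → ℝ := fun j ω => YR X (nj (j + 1)) ω - YR X (nj j) ω with hΔ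
  have hΔmeas : ∀ j, Measurable (Δ j) := fun j =>
    (measurable_YR X hXmeas _).sub (measurable_YR X hXmeas _)
  have hΔbd : ∀ j ω, |Δ j ω| ≤ 1 := by
    intro j ω
    have a := YR_mem01 X hX01 (nj (j + 1)) ω
    have b := YR_mem01 X hX01 (nj j) ω
    rw [hΔ, abs_le]
    constructor <;> simp only <;> [linarith [a.1, b.2]; linarith [a.2, b.1]]
  have hΔint : ∀ j, Integrable (Δ j) P := fun j => integrable_bdd P (hΔmeas j) 1 (hΔbd j)
  have hΔsqint : ∀ j, Integrable (fun ω => (Δ j ω) ^ 2) P := by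
    intro j
    apply integrable_bdd P ((hΔmeas j).pow_const 2) 1
    intro ω
    have := hΔbd j ω
    rw [abs_le] at this ⊢
    constructor <;> nlinarith [this.1, this.2]
  have hsq : ∀ j, ∫ ω, (Δ j ω) ^ 2 ∂P ≤ 1 / ((j : ℝ) + 1) ^ 4 := by
    intro j
    have hm1 : 1 ≤ nj j := by rw [hnj]; exact Nat.one_le_pow _ _ (by omega)
    have hmono : nj j ≤ nj (j + 1) := by rw [hnj]; exact Nat.pow_le_pow_left (by omega) 4
    have := integral_sq_diff P X hX01 hXmeas hexch hm1 hmono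
    have hcast : (1 : ℝ) / ((nj j : ℕ) : ℝ) = 1 / ((j : ℝ) + 1) ^ 4 := by
      rw [hnj]; push_cast; ring_nf
    rw [← hcast]
    exact this
  have habs : ∀ j, ∫ ω, |Δ j ω| ∂P ≤ 1 / ((j : ℝ) + 1) ^ 2 := by
    intro j
    set c : ℝ := ((j : ℝ) + 1) ^ 2 with hcdef
    have hc : (0 : ℝ) < c := by positivity
    have hpt : ∀ ω, |Δ j ω| ≤ (1 / c + c * (Δ j ω) ^ 2) / 2 := by
      intro ω
      have h2 : 2 * (c * |Δ j ω|) ≤ 1 + c ^ 2 * (Δ j ω) ^ 2 := by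
        nlinarith [sq_nonneg (c * |Δ j ω| - 1), sq_abs (Δ j ω)]
      rw [le_div_iff₀ (by norm_num : (0:ℝ) < 2)]
      rw [div_add' _ _ _ (ne_of_gt hc), le_div_iff₀ hc] at *
      nlinarith [h2]
    have hrhs_int : Integrable (fun ω => (1 / c + c * (Δ j ω) ^ 2) / 2) P :=
      (((integrable_const (1 / c)).add ((hΔsqint j).const_mul c)).div_const 2)
    calc ∫ ω, |Δ j ω| ∂P ≤ ∫ ω, (1 / c + c * (Δ j ω) ^ 2) / 2 ∂P :=
          integral_mono ((hΔint j).abs) hrhs_int hpt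
      _ = (1 / c + c * ∫ ω, (Δ j ω) ^ 2 ∂P) / 2 := by
          rw [integral_div, integral_add (integrable_const _) ((hΔsqint j).const_mul c),
            integral_const_mul, integral_const]
          simp [measure_univ]
      _ ≤ (1 / c + c * (1 / ((j : ℝ) + 1) ^ 4)) / 2 := by
          have := hsq j
          have hmul := mul_le_mul_of_nonneg_left this hc.le
          linarith
      _ = 1 / ((j : ℝ) + 1) ^ 2 := by
          rw [hcdef]
          field_simp
          ring
  -- summability
  have hsummable : Summable (fun j : ℕ => 1 / ((j : ℝ) + 1) ^ 2) := by
    have hbase : Summable (fun n : ℕ => 1 / (n : ℝ) ^ 2) :=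
      Real.summable_one_div_nat_pow.mpr (by norm_num)
    have := (summable_nat_add_iff (f := fun n : ℕ => 1 / (n : ℝ) ^ 2) 1).mpr hbase
    refine this.congr fun j => ?_
    push_cast
    ring_nf
  -- a.e. absolute summability
  have hae : ∀ᵐ ω ∂P, Summable (fun j => |Δ j ω|) := by
    have hmeas_tsum : Measurable (fun ω => ∑' j, ENNReal.ofReal |Δ j ω|) := by
      apply Measurable.ennreal_tsum
      intro j
      exact ((hΔmeas j).abs).ennreal_ofReal
    have hlint : ∫⁻ ω, (∑' j, ENNReal.ofReal |Δ j ω|) ∂P ≠ ⊤ := by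
      rw [lintegral_tsum fun j => (((hΔmeas j).abs).ennreal_ofReal).aemeasurable]
      have hle : ∑' j, ∫⁻ ω, ENNReal.ofReal |Δ j ω| ∂P
          ≤ ∑' j : ℕ, ENNReal.ofReal (1 / ((j : ℝ) + 1) ^ 2) := by
        apply ENNReal.tsum_le_tsum
        intro j
        rw [← ofReal_integral_eq_lintegral_ofReal ((hΔint j).abs)
          (ae_of_all _ fun ω => abs_nonneg _)]
        exact ENNReal.ofReal_le_ofReal (habs j)
      have hfin : ∑' j : ℕ, ENNReal.ofReal (1 / ((j : ℝ) + 1) ^ 2) ≠ ⊤ := by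
        rw [← ENNReal.ofReal_tsum_of_nonneg (fun j => by positivity) hsummable]
        exact ENNReal.ofReal_ne_top
      exact ne_top_of_le_ne_top hfin hle
    filter_upwards [ae_lt_top hmeas_tsum hlint] with ω hω
    have hsum' : Summable (fun j => (ENNReal.ofReal |Δ j ω|).toReal) :=
      ENNReal.summable_toReal hω.ne
    refine hsum'.congr fun j => ?_
    rw [ENNReal.toReal_ofReal (abs_nonneg _)]
  -- limit definition
  set Lraw : Ω → ℝ := fun ω => Filter.limsup (fun j => YR X (nj j) ω) atTop with hLraw
  have hLrawmeas : Measurable Lraw :=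
    Measurable.limsup fun j => measurable_YR X hXmeas (nj j)
  set L : Ω → ℝ := fun ω => max 0 (min 1 (Lraw ω)) with hL
  have hLmeas : Measurable L := measurable_const.max (measurable_const.min hLrawmeas)
  have hL01 : ∀ ω, L ω ∈ Set.Icc (0 : ℝ) 1 := by
    intro ω
    constructor
    · exact le_max_left _ _
    · exact max_le (by norm_num) (min_le_left _ _)
  have hconv : ∀ᵐ ω ∂P, Filter.Tendsto (fun j => YR X (nj j) ω) atTop (𝓝 (L ω)) := by
    filter_upwards [hae] with ω hω
    have hsumΔ : Summable (fun j => Δ j ω) := Summable.of_abs hω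
    have htel : ∀ J : ℕ, ∑ j ∈ Finset.range J, Δ j ω = YR X (nj J) ω - YR X (nj 0) ω := by
      intro J
      rw [hΔ]
      exact Finset.sum_range_sub (fun j => YR X (nj j) ω) J
    have htend := hsumΔ.hasSum.tendsto_sum_nat
    have h2 : Filter.Tendsto (fun J => YR X (nj J) ω) atTop
        (𝓝 (∑' j, Δ j ω + YR X (nj 0) ω)) := by
      have := htend.add_const (YR X (nj 0) ω)
      refine Filter.Tendsto.congr (fun J => ?_) this
      rw [htel J]; ring
    set t := ∑' j, Δ j ω + YR X (nj 0) ω with ht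
    have ht01 : 0 ≤ t ∧ t ≤ 1 := by
      constructor
      · exact ge_of_tendsto h2 (Filter.Eventually.of_forall fun J =>
          (YR_mem01 X hX01 (nj J) ω).1)
      · exact le_of_tendsto h2 (Filter.Eventually.of_forall fun J =>
          (YR_mem01 X hX01 (nj J) ω).2)
    have hlim : Lraw ω = t := h2.limsup_eq
    have hLω : L ω = t := by
      have hdef : L ω = max 0 (min 1 (Lraw ω)) := rfl
      rw [hdef, hlim, min_eq_right ht01.2, max_eq_right ht01.1]
    rw [hLω]
    exact h2
  refine ⟨L, hLmeas, hL01, fun k => ?_⟩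
  -- dominated convergence for the k-th moment
  have hdom : Filter.Tendsto (fun j => ∫ ω, (YR X (nj j) ω) ^ k ∂P) atTop
      (𝓝 (∫ ω, (L ω) ^ k ∂P)) := by
    apply tendsto_integral_of_dominated_convergence (fun _ => (1 : ℝ))
    · intro j
      exact ((measurable_YR X hXmeas (nj j)).pow_const k).aestronglyMeasurable
    · exact integrable_const 1
    · intro j
      apply ae_of_all
      intro ω
      have := YR_mem01 X hX01 (nj j) ω
      rw [Real.norm_eq_abs, abs_pow, abs_of_nonneg this.1]
      exact pow_le_one₀ this.1 this.2
    · filter_upwards [hconv] with ω hω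
      exact hω.pow k
  have hmom : Filter.Tendsto (fun j => ∫ ω, (YR X (nj j) ω) ^ k ∂P) atTop
      (𝓝 ((patQ P X k 0).toReal)) := by
    have hnj_tendsto : Filter.Tendsto nj atTop atTop := by
      apply tendsto_atTop_mono (fun j => ?_) tendsto_id
      calc (j : ℕ) ≤ j + 1 := by omega
        _ ≤ (j + 1) ^ 4 := Nat.le_self_pow (by norm_num) _
    exact (tendsto_moment P X hX01 hXmeas hexch k).comp hnj_tendsto
  exact tendsto_nhds_unique hdom hmom

end Aux7
section Aux8

variable {Ω : Type*} [MeasurableSpace Ω] (P : Measure Ω) [IsProbabilityMeasure P]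
  (X : ℕ → Ω → ℕ)

lemma integral_L_pattern (hX01 : ∀ k ω, X k ω ≤ 1) (hXmeas : ∀ k, Measurable (X k))
    (hexch : Exchangeable P X) {L : Ω → ℝ} (hLmeas : Measurable L)
    (hL01 : ∀ ω, L ω ∈ Set.Icc (0 : ℝ) 1)
    (hmom : ∀ k, ∫ ω, (L ω) ^ k ∂P = (patQ P X k 0).toReal) :
    ∀ m h : ℕ, ∫ ω, (L ω) ^ h * (1 - L ω) ^ m ∂P = (patQ P X h m).toReal := by
  have hint : ∀ a b : ℕ, Integrable (fun ω => (L ω) ^ a * (1 - L ω) ^ b) P := by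
    intro a b
    apply integrable_bdd P
      ((hLmeas.pow_const a).mul ((measurable_const.sub hLmeas).pow_const b)) 1
    intro ω
    have h0 := (hL01 ω).1
    have h1 := (hL01 ω).2
    have p1 : L ω ^ a ≤ 1 := pow_le_one₀ h0 h1
    have p2 : (1 - L ω) ^ b ≤ 1 := pow_le_one₀ (by linarith) (by linarith)
    have p3 : 0 ≤ L ω ^ a := pow_nonneg h0 a
    have p4 : 0 ≤ (1 - L ω) ^ b := pow_nonneg (by linarith) b
    simp only [Pi.mul_apply, Pi.sub_apply]
    rw [abs_mul, abs_of_nonneg p3, abs_of_nonneg p4]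
    nlinarith
  intro m
  induction m with
  | zero =>
    intro h
    have : ∀ ω, (L ω) ^ h * (1 - L ω) ^ 0 = (L ω) ^ h := by intro ω; ring
    rw [integral_congr_ae (Filter.Eventually.of_forall this)]
    exact hmom h
  | succ m ih =>
    intro h
    have hpt : ∀ ω, (L ω) ^ h * (1 - L ω) ^ (m + 1)
        = (L ω) ^ h * (1 - L ω) ^ m - (L ω) ^ (h + 1) * (1 - L ω) ^ m := by
      intro ω; ring
    rw [integral_congr_ae (Filter.Eventually.of_forall hpt),
      integral_sub (hint h m) (hint (h + 1) m), ih h, ih (h + 1)]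
    have hrec := patQ_rec P X hX01 hXmeas hexch h m
    have hne1 : patQ P X h (m + 1) ≠ ⊤ := measure_ne_top P _
    have hne2 : patQ P X (h + 1) m ≠ ⊤ := measure_ne_top P _
    have hadd : (patQ P X h m).toReal
        = (patQ P X h (m + 1)).toReal + (patQ P X (h + 1) m).toReal := by
      rw [hrec, ENNReal.toReal_add hne1 hne2]
    linarith

end Aux8

/-- de Finetti representation: for an exchangeable sequence of `{0,1}`-valued
random variables there is a probability measure `μ` on `[0,1]` such that
`ω_h^(n) = C(n,h) ∫₀¹ ξ^h (1-ξ)^{n-h} dμ(ξ)` for all `n ≥ 1`, `h ≤ n`. -/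
theorem deFinetti_stmt6 {Ω : Type*} [MeasurableSpace Ω] (P : Measure Ω)
    [IsProbabilityMeasure P] (X : ℕ → Ω → ℕ)
    (hX01 : ∀ k ω, X k ω ≤ 1) (hXmeas : ∀ k, Measurable (X k))
    (hexch : Exchangeable P X) :
    ∃ μ : Measure ℝ, IsProbabilityMeasure μ ∧ μ (Set.Icc (0:ℝ) 1)ᶜ = 0 ∧
      ∀ n h : ℕ, 1 ≤ n → h ≤ n →
        succProb P X n h =
          (n.choose h : ℝ) * ∫ ξ in Set.Icc (0:ℝ) 1, ξ ^ h * (1 - ξ) ^ (n - h) ∂μ := by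
  obtain ⟨L, hLmeas, hL01, hmom⟩ := exists_limit_moments P X hX01 hXmeas hexch
  refine ⟨P.map L, Measure.isProbabilityMeasure_map hLmeas.aemeasurable, ?_, ?_⟩
  · rw [Measure.map_apply hLmeas measurableSet_Icc.compl]
    have hempty : L ⁻¹' (Set.Icc (0:ℝ) 1)ᶜ = ∅ := by
      ext ω
      simp only [Set.mem_preimage, Set.mem_compl_iff, Set.mem_empty_iff_false, iff_false,
        not_not]
      exact hL01 ω
    rw [hempty]
    exact measure_empty
  · intro n h hn hhn
    have hrestrict : (P.map L).restrict (Set.Icc (0:ℝ) 1) = P.map L := by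
      rw [Measure.restrict_map hLmeas measurableSet_Icc]
      have huniv : L ⁻¹' (Set.Icc (0:ℝ) 1) = Set.univ := by
        ext ω
        simp only [Set.mem_preimage, Set.mem_univ, iff_true]
        exact hL01 ω
      rw [huniv, Measure.restrict_univ]
    have hcont : Continuous (fun ξ : ℝ => ξ ^ h * (1 - ξ) ^ (n - h)) :=
      ((continuous_id.pow h).mul ((continuous_const.sub continuous_id).pow (n - h)))
    have hRHS : (∫ ξ in Set.Icc (0:ℝ) 1, ξ ^ h * (1 - ξ) ^ (n - h) ∂(P.map L))
        = (patQ P X h (n - h)).toReal := by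
      rw [hrestrict, integral_map hLmeas.aemeasurable hcont.aestronglyMeasurable]
      exact integral_L_pattern P X hX01 hXmeas hexch hLmeas hL01 hmom (n - h) h
    rw [hRHS]
    unfold succProb
    rw [prob_count P X hX01 hXmeas hexch n h hhn, ENNReal.toReal_mul]
    congr 1
end

section
/- (Theorem I) Let X be an exchangeable sequence of {0,1}-valued random variables with de Finetti measure μ. Let 0 ≤ ξ₁ < ξ₂ ≤ 1 with μ({ξ₁}) = μ({ξ₂}) = 0. Then the probability that the frequency over n trials lies between ξ₁ and ξ₂ converges: P(ξ₁ ≤ (X_0 + ⋯ + X_{n−1})/n ≤ ξ₂) → μ([ξ₁, ξ₂]) as n → ∞. -/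
open MeasureTheory ProbabilityTheory Filter

/-- A probability measure `μ` on `[0,1]` is a de Finetti measure for the sequence `X` if
`ω_h^(n) = C(n,h) ∫₀¹ ξ^h (1-ξ)^{n-h} dμ(ξ)` for all `1 ≤ n` and `h ≤ n`. -/
def IsDeFinettiMeasure {Ω : Type*} [MeasurableSpace Ω] (P : Measure Ω)
    (X : ℕ → Ω → ℕ) (μ : Measure ℝ) : Prop :=
  IsProbabilityMeasure μ ∧ μ (Set.Icc (0:ℝ) 1)ᶜ = 0 ∧
    ∀ n h : ℕ, 1 ≤ n → h ≤ n →
      succProb P X n h =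
        (n.choose h : ℝ) * ∫ ξ in Set.Icc (0:ℝ) 1, ξ ^ h * (1 - ξ) ^ (n - h) ∂μ


open Finset

noncomputable def bnh (n h : ℕ) (ξ : ℝ) : ℝ := (n.choose h : ℝ) * (ξ ^ h * (1 - ξ) ^ (n - h))

lemma bnh_eval (n h : ℕ) (ξ : ℝ) : (bernsteinPolynomial ℝ n h).eval ξ = bnh n h ξ := by
  simp [bernsteinPolynomial, bnh, mul_assoc]

lemma bnh_nonneg {ξ : ℝ} (h0 : 0 ≤ ξ) (h1 : ξ ≤ 1) (n h : ℕ) : 0 ≤ bnh n h ξ := by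
  have h1' : (0:ℝ) ≤ 1 - ξ := by linarith
  exact mul_nonneg (by positivity) (mul_nonneg (pow_nonneg h0 _) (pow_nonneg h1' _))

lemma sum_bnh (n : ℕ) (ξ : ℝ) : ∑ h ∈ Finset.range (n+1), bnh n h ξ = 1 := by
  have := congrArg (Polynomial.eval ξ) (bernsteinPolynomial.sum ℝ n)
  simpa [Polynomial.eval_finset_sum, bnh_eval] using this

lemma var_bnh {n : ℕ} (hn : 1 ≤ n) (ξ : ℝ) :
    ∑ h ∈ Finset.range (n+1), (ξ - h/n)^2 * bnh n h ξ = ξ * (1 - ξ) / n := by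
  have hne : (n:ℝ) ≠ 0 := Nat.cast_ne_zero.mpr (by omega)
  have := congrArg (Polynomial.eval ξ) (bernsteinPolynomial.variance ℝ n)
  simp only [Polynomial.eval_finset_sum, Polynomial.eval_mul, Polynomial.eval_pow,
    Polynomial.eval_sub, Polynomial.eval_smul, Polynomial.eval_natCast, Polynomial.eval_X,
    Polynomial.eval_one, bnh_eval, nsmul_eq_mul] at this
  have h2 : ∀ h ∈ Finset.range (n+1),
      (ξ - (h:ℝ)/n)^2 * bnh n h ξ = ((n:ℝ)*ξ - h)^2 * bnh n h ξ / n^2 := by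
    intro h _
    have e : ξ - (h:ℝ)/n = ((n:ℝ)*ξ - h)/n := by field_simp
    rw [e, div_pow, div_mul_eq_mul_div]
  rw [Finset.sum_congr rfl h2, ← Finset.sum_div, this]
  field_simp

lemma cheb {n : ℕ} (hn : 1 ≤ n) {ξ δ : ℝ} (h0 : 0 ≤ ξ) (h1 : ξ ≤ 1) (hδ : 0 < δ)
    {S : Finset ℕ} (hfar : ∀ h ∈ S, h ∈ Finset.range (n+1) → δ ≤ |ξ - (h:ℝ)/n|) :
    ∑ h ∈ S ∩ Finset.range (n+1), bnh n h ξ ≤ 1 / (n * δ^2) := by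
  have hnpos : (0:ℝ) < n := by exact_mod_cast Nat.pos_of_ne_zero (by omega)
  have key : δ^2 * ∑ h ∈ S ∩ Finset.range (n+1), bnh n h ξ ≤ ξ * (1-ξ) / n := by
    rw [Finset.mul_sum]
    calc ∑ h ∈ S ∩ Finset.range (n+1), δ^2 * bnh n h ξ
        ≤ ∑ h ∈ S ∩ Finset.range (n+1), (ξ - (h:ℝ)/n)^2 * bnh n h ξ := by
          refine Finset.sum_le_sum fun h hh => ?_
          rw [Finset.mem_inter] at hh
          refine mul_le_mul_of_nonneg_right ?_ (bnh_nonneg h0 h1 n h)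
          calc δ^2 ≤ |ξ - (h:ℝ)/n|^2 := by
                have := hfar h hh.1 hh.2
                nlinarith [abs_nonneg (ξ - (h:ℝ)/n)]
            _ = (ξ - (h:ℝ)/n)^2 := sq_abs _
      _ ≤ ∑ h ∈ Finset.range (n+1), (ξ - (h:ℝ)/n)^2 * bnh n h ξ := by
          refine Finset.sum_le_sum_of_subset_of_nonneg (Finset.inter_subset_right) ?_
          intro h _ _
          exact mul_nonneg (sq_nonneg _) (bnh_nonneg h0 h1 n h)
      _ = ξ * (1 - ξ) / n := var_bnh hn ξ
  have hb : ξ * (1 - ξ) ≤ 1 := by nlinarith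
  rw [le_div_iff₀ (by positivity)] at *
  nlinarith [key, hb]

noncomputable def Ff (ξ₁ ξ₂ : ℝ) (n : ℕ) (ξ : ℝ) : ℝ :=
  ∑ h ∈ (Finset.range (n+1)).filter (fun h : ℕ => ξ₁ ≤ (h:ℝ)/n ∧ (h:ℝ)/n ≤ ξ₂), bnh n h ξ

lemma one_div_n_mul_tendsto (δ : ℝ) :
    Tendsto (fun n : ℕ => 1 / ((n:ℝ) * δ^2)) atTop (nhds 0) := by
  have h1 : Tendsto (fun n : ℕ => (1 / (n:ℝ)) * (1/δ^2)) atTop (nhds (0 * (1/δ^2))) :=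
    tendsto_one_div_atTop_nhds_zero_nat.mul_const _
  rw [zero_mul] at h1
  refine h1.congr fun n => ?_
  rw [div_mul_div_comm, one_mul]

lemma Ff_le_one {ξ₁ ξ₂ ξ : ℝ} (h0 : 0 ≤ ξ) (h1 : ξ ≤ 1) (n : ℕ) : Ff ξ₁ ξ₂ n ξ ≤ 1 := by
  rw [← sum_bnh n ξ]
  exact Finset.sum_le_sum_of_subset_of_nonneg (Finset.filter_subset _ _)
    fun h _ _ => bnh_nonneg h0 h1 n h

lemma Ff_nonneg {ξ₁ ξ₂ ξ : ℝ} (h0 : 0 ≤ ξ) (h1 : ξ ≤ 1) (n : ℕ) : 0 ≤ Ff ξ₁ ξ₂ n ξ :=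
  Finset.sum_nonneg fun h _ => bnh_nonneg h0 h1 n h

lemma tendsto_Ff_one {ξ₁ ξ₂ ξ : ℝ} (h0 : 0 ≤ ξ₁) (h1 : ξ₂ ≤ 1)
    (ha : ξ₁ < ξ) (hb : ξ < ξ₂) :
    Tendsto (fun n => Ff ξ₁ ξ₂ n ξ) atTop (nhds 1) := by
  have hξ0 : 0 ≤ ξ := le_trans h0 ha.le
  have hξ1 : ξ ≤ 1 := le_trans hb.le h1
  set δ : ℝ := min (ξ - ξ₁) (ξ₂ - ξ) with hδdef
  have hδ : 0 < δ := lt_min (by linarith) (by linarith)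
  have lower : ∀ n : ℕ, 1 ≤ n → 1 - 1/((n:ℝ)*δ^2) ≤ Ff ξ₁ ξ₂ n ξ := by
    intro n hn
    set Tn := (Finset.range (n+1)).filter (fun h : ℕ => ξ₁ ≤ (h:ℝ)/n ∧ (h:ℝ)/n ≤ ξ₂) with hTn
    have hFf : Ff ξ₁ ξ₂ n ξ = ∑ h ∈ Tn, bnh n h ξ := rfl
    have hsplit : ∑ h ∈ Finset.range (n+1) \ Tn, bnh n h ξ + ∑ h ∈ Tn, bnh n h ξ = 1 := by
      rw [hTn, Finset.sum_sdiff (Finset.filter_subset _ _), sum_bnh]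
    have hch : ∑ h ∈ (Finset.range (n+1) \ Tn) ∩ Finset.range (n+1), bnh n h ξ
        ≤ 1/((n:ℝ)*δ^2) := by
      refine cheb hn hξ0 hξ1 hδ ?_
      intro h hh hmem
      rw [Finset.mem_sdiff, hTn, Finset.mem_filter] at hh
      have hnot := hh.2
      push_neg at hnot
      have hcase := hnot hmem
      rcases lt_or_ge ((h:ℝ)/n) ξ₁ with hc | hc
      · have : δ ≤ ξ - (h:ℝ)/n := le_trans (min_le_left _ _) (by linarith)
        exact le_trans this (le_abs_self _)
      · have : δ ≤ (h:ℝ)/n - ξ := le_trans (min_le_right _ _) (by linarith [hcase hc])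
        calc δ ≤ (h:ℝ)/n - ξ := this
          _ ≤ |ξ - (h:ℝ)/n| := by rw [abs_sub_comm]; exact le_abs_self _
    rw [Finset.inter_eq_left.mpr (Finset.sdiff_subset)] at hch
    linarith
  refine tendsto_of_tendsto_of_tendsto_of_le_of_le'
    (g := fun n : ℕ => 1 - 1/((n:ℝ)*δ^2)) (h := fun _ => 1)
    ?_ tendsto_const_nhds ?_ ?_
  · have h2 : Tendsto (fun n : ℕ => 1 - 1/((n:ℝ)*δ^2)) atTop (nhds (1 - 0)) :=
      Tendsto.sub tendsto_const_nhds (one_div_n_mul_tendsto δ)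
    simpa using h2
  · exact eventually_atTop.2 ⟨1, lower⟩
  · exact Eventually.of_forall fun n => Ff_le_one hξ0 hξ1 n

lemma tendsto_Ff_zero {ξ₁ ξ₂ ξ : ℝ} (h12 : ξ₁ < ξ₂) (hξ0 : 0 ≤ ξ) (hξ1 : ξ ≤ 1)
    (hout : ξ < ξ₁ ∨ ξ₂ < ξ) :
    Tendsto (fun n => Ff ξ₁ ξ₂ n ξ) atTop (nhds 0) := by
  set δ : ℝ := max (ξ₁ - ξ) (ξ - ξ₂) with hδdef
  have hδ : 0 < δ := by
    rcases hout with h | h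
    · exact lt_max_of_lt_left (by linarith)
    · exact lt_max_of_lt_right (by linarith)
  have upper : ∀ n : ℕ, 1 ≤ n → Ff ξ₁ ξ₂ n ξ ≤ 1/((n:ℝ)*δ^2) := by
    intro n hn
    have hnr : (0:ℝ) < n := by exact_mod_cast Nat.pos_of_ne_zero (by omega)
    have hch := cheb (S := (Finset.range (n+1)).filter
        (fun h => ξ₁ ≤ (h:ℝ)/n ∧ (h:ℝ)/n ≤ ξ₂)) hn hξ0 hξ1 hδ ?_
    · rwa [Finset.inter_eq_left.mpr (Finset.filter_subset _ _)] at hch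
    · intro h hh _
      rw [Finset.mem_filter] at hh
      obtain ⟨hl, hr⟩ := hh.2
      rcases hout with hc | hc
      · have : δ ≤ (h:ℝ)/n - ξ := max_le (by linarith) (by linarith)
        calc δ ≤ (h:ℝ)/n - ξ := this
          _ ≤ |ξ - (h:ℝ)/n| := by rw [abs_sub_comm]; exact le_abs_self _
      · have : δ ≤ ξ - (h:ℝ)/n := max_le (by linarith) (by linarith)
        exact le_trans this (le_abs_self _)
  refine tendsto_of_tendsto_of_tendsto_of_le_of_le'
    (g := fun _ : ℕ => (0:ℝ)) (h := fun n : ℕ => 1/((n:ℝ)*δ^2))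
    tendsto_const_nhds (one_div_n_mul_tendsto δ) ?_ ?_
  · exact Eventually.of_forall fun n => Ff_nonneg hξ0 hξ1 n
  · exact eventually_atTop.2 ⟨1, upper⟩

lemma continuous_Ff (ξ₁ ξ₂ : ℝ) (n : ℕ) : Continuous (Ff ξ₁ ξ₂ n) := by
  unfold Ff bnh
  exact continuous_finset_sum _ fun h _ =>
    continuous_const.mul ((continuous_pow h).mul ((continuous_const.sub continuous_id).pow _))

/-- Theorem I: if `μ({ξ₁}) = μ({ξ₂}) = 0`, then
`P(ξ₁ ≤ (X_0 + ⋯ + X_{n-1})/n ≤ ξ₂) → μ([ξ₁, ξ₂])` as `n → ∞`. -/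
theorem deFinetti_stmt7 {Ω : Type*} [MeasurableSpace Ω] (P : Measure Ω)
    [IsProbabilityMeasure P] (X : ℕ → Ω → ℕ)
    (hX01 : ∀ k ω, X k ω ≤ 1) (hXmeas : ∀ k, Measurable (X k))
    (hexch : Exchangeable P X) (μ : Measure ℝ) (hμ : IsDeFinettiMeasure P X μ)
    (ξ₁ ξ₂ : ℝ) (h0 : 0 ≤ ξ₁) (h12 : ξ₁ < ξ₂) (h1 : ξ₂ ≤ 1)
    (hμ₁ : μ {ξ₁} = 0) (hμ₂ : μ {ξ₂} = 0) :
    Tendsto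
      (fun n : ℕ =>
        (P {ω | ξ₁ ≤ (∑ i ∈ Finset.range n, X i ω : ℝ) / n ∧
                (∑ i ∈ Finset.range n, X i ω : ℝ) / n ≤ ξ₂}).toReal)
      atTop (nhds (μ (Set.Icc ξ₁ ξ₂)).toReal) := by
  obtain ⟨hprobμ, hsupp, hrep⟩ := hμ
  haveI := hprobμ
  -- `G` is the limit function
  set G : ℝ → ℝ := (Set.Ioo ξ₁ ξ₂).indicator (fun _ => (1:ℝ)) with hG
  -- measurability / bounds for dominated convergence
  have hFmeas : ∀ n : ℕ, AEStronglyMeasurable (Ff ξ₁ ξ₂ n) (μ.restrict (Set.Icc 0 1)) :=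
    fun n => (continuous_Ff ξ₁ ξ₂ n).aestronglyMeasurable
  have hbound : ∀ n : ℕ, ∀ᵐ ξ ∂(μ.restrict (Set.Icc (0:ℝ) 1)), ‖Ff ξ₁ ξ₂ n ξ‖ ≤ 1 := by
    intro n
    filter_upwards [ae_restrict_mem measurableSet_Icc] with ξ hξ
    rw [Real.norm_eq_abs, abs_le]
    exact ⟨by linarith [Ff_nonneg (ξ₁ := ξ₁) (ξ₂ := ξ₂) hξ.1 hξ.2 n],
      Ff_le_one hξ.1 hξ.2 n⟩
  have hres : ∀ x : ℝ, μ {x} = 0 →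
      ∀ᵐ ξ ∂(μ.restrict (Set.Icc (0:ℝ) 1)), ξ ≠ x := by
    intro x hx
    rw [ae_iff]
    have : {ξ : ℝ | ¬ ξ ≠ x} = {x} := by ext y; simp
    rw [this]
    exact le_antisymm (le_trans (Measure.restrict_le_self _) hx.le) zero_le
  have hae : ∀ᵐ ξ ∂(μ.restrict (Set.Icc (0:ℝ) 1)),
      Tendsto (fun n => Ff ξ₁ ξ₂ n ξ) atTop (nhds (G ξ)) := by
    filter_upwards [hres ξ₁ hμ₁, hres ξ₂ hμ₂, ae_restrict_mem measurableSet_Icc]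
      with ξ hne1 hne2 hmem
    by_cases hin : ξ₁ < ξ ∧ ξ < ξ₂
    · rw [hG, Set.indicator_of_mem (by exact hin : ξ ∈ Set.Ioo ξ₁ ξ₂)]
      exact tendsto_Ff_one h0 h1 hin.1 hin.2
    · have hout : ξ < ξ₁ ∨ ξ₂ < ξ := by
        push_neg at hin
        rcases lt_trichotomy ξ ξ₁ with h | h | h
        · exact Or.inl h
        · exact absurd h hne1
        · exact Or.inr (lt_of_le_of_ne (hin h) (Ne.symm hne2))
      rw [hG, Set.indicator_of_notMem (by
        rcases hout with h | h
        · exact fun hc => absurd hc.1 (not_lt.2 h.le)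
        · exact fun hc => absurd hc.2 (not_lt.2 h.le))]
      exact tendsto_Ff_zero h12 hmem.1 hmem.2 hout
  have hint : Tendsto (fun n => ∫ ξ in Set.Icc (0:ℝ) 1, Ff ξ₁ ξ₂ n ξ ∂μ) atTop
      (nhds (∫ ξ in Set.Icc (0:ℝ) 1, G ξ ∂μ)) :=
    tendsto_integral_of_dominated_convergence (fun _ => (1:ℝ)) hFmeas
      (integrable_const 1) hbound hae
  -- identify the limit
  have hIoo_sub : Set.Ioo ξ₁ ξ₂ ⊆ Set.Icc (0:ℝ) 1 :=
    fun x hx => ⟨h0.trans hx.1.le, hx.2.le.trans h1⟩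
  have hGlim : ∫ ξ in Set.Icc (0:ℝ) 1, G ξ ∂μ = (μ (Set.Icc ξ₁ ξ₂)).toReal := by
    rw [hG, integral_indicator_const (1:ℝ) measurableSet_Ioo, smul_eq_mul, mul_one,
      measureReal_def, Measure.restrict_apply measurableSet_Ioo, Set.inter_eq_left.mpr hIoo_sub]
    congr 1
    apply le_antisymm
    · calc μ (Set.Ioo ξ₁ ξ₂) ≤ μ (Set.Icc ξ₁ ξ₂) := measure_mono Set.Ioo_subset_Icc_self
        _ = _ := rfl
    · calc μ (Set.Icc ξ₁ ξ₂) ≤ μ (Set.Ioo ξ₁ ξ₂ ∪ {ξ₁} ∪ {ξ₂}) := by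
            refine measure_mono fun x hx => ?_
            by_cases hx1 : x = ξ₁
            · exact Or.inl (Or.inr (by simp [hx1]))
            · by_cases hx2 : x = ξ₂
              · exact Or.inr (by simp [hx2])
              · exact Or.inl (Or.inl ⟨lt_of_le_of_ne hx.1 (Ne.symm hx1),
                  lt_of_le_of_ne hx.2 hx2⟩)
        _ ≤ μ (Set.Ioo ξ₁ ξ₂ ∪ {ξ₁}) + μ {ξ₂} := measure_union_le _ _
        _ ≤ μ (Set.Ioo ξ₁ ξ₂) + μ {ξ₁} + μ {ξ₂} :=
            add_le_add_left (measure_union_le _ _) _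
        _ = μ (Set.Ioo ξ₁ ξ₂) := by rw [hμ₁, hμ₂, add_zero, add_zero]
  rw [hGlim] at hint
  -- the probability equals the integral for n ≥ 1
  have key : ∀ n : ℕ, 1 ≤ n →
      (P {ω | ξ₁ ≤ (∑ i ∈ Finset.range n, X i ω : ℝ) / n ∧
              (∑ i ∈ Finset.range n, X i ω : ℝ) / n ≤ ξ₂}).toReal
        = ∫ ξ in Set.Icc (0:ℝ) 1, Ff ξ₁ ξ₂ n ξ ∂μ := by
    intro n hn
    set S : Ω → ℕ := fun ω => ∑ i ∈ Finset.range n, X i ω with hS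
    have hSmeas : Measurable S := Finset.measurable_sum _ fun i _ => hXmeas i
    have hcast : ∀ ω, (∑ i ∈ Finset.range n, (X i ω : ℝ)) = ((S ω : ℕ) : ℝ) := by
      intro ω; rw [hS]; push_cast; ring
    set Tn := (Finset.range (n+1)).filter
      (fun h : ℕ => ξ₁ ≤ (h:ℝ)/n ∧ (h:ℝ)/n ≤ ξ₂) with hTn
    have hEset : {ω | ξ₁ ≤ (∑ i ∈ Finset.range n, (X i ω : ℝ)) / n ∧
        (∑ i ∈ Finset.range n, (X i ω : ℝ)) / n ≤ ξ₂}
        = ⋃ h ∈ Tn, {ω | S ω = h} := by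
      ext ω
      simp only [Set.mem_setOf_eq, Set.mem_iUnion, hTn, Finset.mem_filter,
        Finset.mem_range, exists_prop, hcast]
      constructor
      · rintro ⟨ha, hb⟩
        refine ⟨S ω, ⟨?_, ha, hb⟩, rfl⟩
        have : S ω ≤ ∑ i ∈ Finset.range n, 1 :=
          Finset.sum_le_sum fun i _ => hX01 i ω
        simp only [Finset.sum_const, Finset.card_range, smul_eq_mul, mul_one] at this
        omega
      · rintro ⟨h, ⟨_, ha, hb⟩, hs⟩
        rw [hs]; exact ⟨ha, hb⟩
    have hmeas : ∀ h ∈ Tn, MeasurableSet {ω | S ω = h} :=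
      fun h _ => hSmeas (measurableSet_singleton h)
    have hdisj : Set.PairwiseDisjoint (↑Tn) (fun h => {ω | S ω = h}) := by
      intro a _ b _ hab
      refine Set.disjoint_left.2 fun ω hωa hωb => hab ?_
      rw [Set.mem_setOf_eq] at hωa hωb
      rw [← hωa, hωb]
    rw [hEset, measure_biUnion_finset hdisj hmeas,
      ENNReal.toReal_sum (fun h _ => measure_ne_top P _)]
    have hrw : ∀ h ∈ Tn, (P {ω | S ω = h}).toReal
        = (n.choose h : ℝ) * ∫ ξ in Set.Icc (0:ℝ) 1, ξ ^ h * (1 - ξ) ^ (n - h) ∂μ := by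
      intro h hh
      rw [hTn, Finset.mem_filter, Finset.mem_range] at hh
      exact hrep n h hn (by omega)
    rw [Finset.sum_congr rfl hrw]
    have hintg : ∀ h : ℕ, IntegrableOn (fun ξ : ℝ => ξ ^ h * (1 - ξ) ^ (n - h))
        (Set.Icc (0:ℝ) 1) μ :=
      fun h => (Continuous.continuousOn ((continuous_pow h).mul
        ((continuous_const.sub continuous_id).pow _))).integrableOn_compact isCompact_Icc
    rw [show (∫ ξ in Set.Icc (0:ℝ) 1, Ff ξ₁ ξ₂ n ξ ∂μ)
        = ∑ h ∈ Tn, ∫ ξ in Set.Icc (0:ℝ) 1,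
            (n.choose h : ℝ) * (ξ ^ h * (1 - ξ) ^ (n - h)) ∂μ from
      integral_finset_sum Tn fun h _ => (hintg h).const_mul _]
    refine Finset.sum_congr rfl fun h _ => ?_
    rw [MeasureTheory.integral_const_mul]
  refine hint.congr' ?_
  exact eventually_atTop.2 ⟨1, fun n hn => (key n hn).symm⟩
end
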